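/- arXiv:0907.1458 — 5 statements merged into one kernel-verified Lean document; each statement's English description precedes it below -/
import Mathlib

section
/- Define F(τ) = max over (m₁,m₂) ∈ {0,1/2}^{2g} of |θ_{(m₁,m₂)}(τ,0)|, the maximum of the absolute values of the 2^{2g} theta Nullwerte with half-integer characteristics. Then for every τ ∈ 𝔖_g one has F(τ) ≥ F(2τ). -/
/-- The theta function with characteristics `m₁, m₂ ∈ ℝ^g`:
`θ_{(m₁,m₂)}(τ,z) = ∑_{n∈ℤ^g} exp(iπ (n+m₁)ᵀτ(n+m₁) + 2iπ (n+m₁)ᵀ(z+m₂))`. -/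
noncomputable def thetaChar {g : ℕ} (m₁ m₂ : Fin g → ℝ)
    (τ : Matrix (Fin g) (Fin g) ℂ) (z : Fin g → ℂ) : ℂ :=
  ∑' n : Fin g → ℤ,
    Complex.exp (Real.pi * Complex.I *
        (∑ i, ∑ j, ((n i : ℂ) + (m₁ i : ℂ)) * τ i j * ((n j : ℂ) + (m₁ j : ℂ)))
      + 2 * Real.pi * Complex.I * (∑ i, ((n i : ℂ) + (m₁ i : ℂ)) * (z i + (m₂ i : ℂ))))

/-- Encoding of a half-integer characteristic: a vector in `{0,1/2}^g`. -/
noncomputable def halfChar {g : ℕ} (b : Fin g → Bool) : Fin g → ℝ :=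
  fun i => if b i then (1/2 : ℝ) else 0

namespace ThetaDup

open Complex Finset

variable {g : ℕ}

/-- The quadratic form `xᵀ τ x`. -/
noncomputable def qf (τ : Matrix (Fin g) (Fin g) ℂ) (x : Fin g → ℂ) : ℂ :=
  ∑ i, ∑ j, x i * τ i j * x j

/-- A term of the theta series with characteristics `(r, β)` at `z = 0`. -/
noncomputable def tt (τ : Matrix (Fin g) (Fin g) ℂ) (r β : Fin g → ℝ) (n : Fin g → ℤ) : ℂ :=
  Complex.exp (Real.pi * Complex.I * qf τ (fun i => (n i : ℂ) + (r i : ℂ))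
    + 2 * Real.pi * Complex.I * ∑ i, ((n i : ℂ) + (r i : ℂ)) * (β i : ℂ))

lemma thetaChar_eq (m₁ m₂ : Fin g → ℝ) (τ : Matrix (Fin g) (Fin g) ℂ) :
    thetaChar m₁ m₂ τ 0 = ∑' n : Fin g → ℤ, tt τ m₁ m₂ n := by
  simp [thetaChar, tt, qf]

lemma norm_tt (τ : Matrix (Fin g) (Fin g) ℂ) (r β : Fin g → ℝ) (n : Fin g → ℤ) :
    ‖tt τ r β n‖
      = Real.exp (-(Real.pi *
          ∑ i, ∑ j, ((n i : ℝ) + r i) * (τ i j).im * ((n j : ℝ) + r j))) := by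
  rw [tt, Complex.norm_exp]
  congr 1
  have h1 : ∀ i : Fin g, ((n i : ℂ) + (r i : ℂ)) = ((((n i : ℝ) + r i) : ℝ) : ℂ) := by
    intro i; push_cast; ring
  have hQ : (qf τ (fun i => (n i : ℂ) + (r i : ℂ))).im
      = ∑ i, ∑ j, ((n i : ℝ) + r i) * (τ i j).im * ((n j : ℝ) + r j) := by
    rw [qf, Complex.im_sum]
    refine Finset.sum_congr rfl fun i _ => ?_
    rw [Complex.im_sum]
    refine Finset.sum_congr rfl fun j _ => ?_
    rw [h1 i, h1 j]
    simp [Complex.mul_im, Complex.ofReal_re, Complex.ofReal_im]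
    try ring
  have hL : (∑ i, ((n i : ℂ) + (r i : ℂ)) * (β i : ℂ)).im = 0 := by
    rw [Complex.im_sum]
    refine Finset.sum_eq_zero fun i _ => ?_
    rw [h1 i, ← Complex.ofReal_mul]
    exact Complex.ofReal_im _
  rw [Complex.add_re]
  have e1 : ((Real.pi : ℂ) * Complex.I * qf τ (fun i => (n i : ℂ) + (r i : ℂ))).re
      = -(Real.pi * (qf τ (fun i => (n i : ℂ) + (r i : ℂ))).im) := by
    simp [Complex.mul_re, Complex.mul_im]
  have e2 : (2 * (Real.pi : ℂ) * Complex.I *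
      (∑ i, ((n i : ℂ) + (r i : ℂ)) * (β i : ℂ))).re = 0 := by
    simp [Complex.mul_re, Complex.mul_im, hL]
  rw [e1, e2, hQ]
  ring

lemma summable_gauss_nat (d t : ℝ) (hd : 0 < d) :
    Summable fun n : ℕ => Real.exp (-(d * ((n : ℝ) + t) ^ 2)) := by
  have hr0 : (0:ℝ) ≤ Real.exp (-(d/2)) := (Real.exp_pos _).le
  have hr1 : Real.exp (-(d/2)) < 1 := by
    rw [Real.exp_lt_one_iff]; linarith
  refine Summable.of_nonneg_of_le (fun n => (Real.exp_pos _).le) (fun n => ?_)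
    ((summable_geometric_of_lt_one hr0 hr1).mul_left (Real.exp (d * t ^ 2)))
  rw [← Real.exp_nat_mul, ← Real.exp_add]
  apply Real.exp_le_exp.mpr
  have h1 : (n:ℝ)^2/2 - t^2 ≤ ((n:ℝ) + t)^2 := by nlinarith [sq_nonneg ((n:ℝ) + 2*t)]
  have h2 : (n:ℝ) ≤ (n:ℝ)^2 := by
    have : n ≤ n ^ 2 := Nat.le_self_pow two_ne_zero n
    exact_mod_cast this
  nlinarith [mul_le_mul_of_nonneg_left h1 hd.le,
    mul_le_mul_of_nonneg_left h2 (by linarith : (0:ℝ) ≤ d/2)]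

lemma summable_gauss_int (d t : ℝ) (hd : 0 < d) :
    Summable fun n : ℤ => Real.exp (-(d * ((n : ℝ) + t) ^ 2)) := by
  apply Summable.of_nat_of_neg
  · simpa using summable_gauss_nat d t hd
  · refine (summable_gauss_nat d (-t) hd).congr fun n => ?_
    congr 1
    push_cast
    ring

lemma summable_pi_prod : ∀ {k : ℕ} (w : Fin k → ℤ → ℝ), (∀ i n, 0 ≤ w i n) →
    (∀ i, Summable (w i)) → Summable fun n : Fin k → ℤ => ∏ i, w i (n i) := by
  intro k
  induction k with
  | zero =>
      intro w _ _
      haveI : Unique (Fin 0 → ℤ) := ⟨⟨fun i => i.elim0⟩, fun f => funext fun i => i.elim0⟩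
      exact Summable.of_finite
  | succ k ih =>
      intro w hw hsum
      have h := (hsum 0).mul_of_nonneg
        (ih (fun i => w i.succ) (fun i n => hw _ _) (fun i => hsum i.succ))
        (fun n => hw 0 n) (fun v => Finset.prod_nonneg fun i _ => hw _ _)
      rw [← (Fin.consEquiv (fun _ : Fin (k+1) => ℤ)).summable_iff]
      refine h.congr fun x => ?_
      obtain ⟨x0, xs⟩ := x
      simp only [Function.comp_apply, Fin.consEquiv_apply]
      rw [Fin.prod_univ_succ]
      simp

set_option maxHeartbeats 1000000 in
lemma summable_norm_tt (τ : Matrix (Fin g) (Fin g) ℂ) {ε : ℝ} (hε : 0 < ε)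
    (hq : ∀ x : Fin g → ℝ, ε * ∑ i, x i ^ 2 ≤ ∑ i, ∑ j, x i * (τ i j).im * x j)
    (r β : Fin g → ℝ) :
    Summable fun n : Fin g → ℤ => ‖tt τ r β n‖ := by
  have hb : Summable fun n : Fin g → ℤ =>
      ∏ i, Real.exp (-(Real.pi * ε * ((n i : ℝ) + r i) ^ 2)) := by
    refine summable_pi_prod (fun i m => Real.exp (-(Real.pi * ε * ((m : ℝ) + r i) ^ 2)))
      (fun i n => (Real.exp_pos _).le) (fun i => ?_)
    have := summable_gauss_int (Real.pi * ε) (r i) (by positivity)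
    exact this
  refine Summable.of_nonneg_of_le (fun n => norm_nonneg _) (fun n => ?_) hb
  rw [norm_tt, ← Real.exp_sum]
  apply Real.exp_le_exp.mpr
  have hx := hq (fun i => (n i : ℝ) + r i)
  have h2 : Real.pi * (ε * ∑ i, ((n i : ℝ) + r i) ^ 2)
      ≤ Real.pi * ∑ i, ∑ j, ((n i : ℝ) + r i) * (τ i j).im * ((n j : ℝ) + r j) := by
    apply mul_le_mul_of_nonneg_left _ Real.pi_pos.le
    linarith
  have h3 : ∑ i, -(Real.pi * ε * ((n i : ℝ) + r i) ^ 2)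
      = -(Real.pi * (ε * ∑ i, ((n i : ℝ) + r i) ^ 2)) := by
    rw [Finset.mul_sum, Finset.mul_sum, ← Finset.sum_neg_distrib]
    exact Finset.sum_congr rfl fun i _ => by ring
  rw [h3]
  linarith

lemma posdef_bound (hg : 1 ≤ g) (Y : Matrix (Fin g) (Fin g) ℝ) (hY : Y.PosDef) :
    ∃ ε : ℝ, 0 < ε ∧ ∀ x : Fin g → ℝ, ε * ∑ i, x i ^ 2 ≤ ∑ i, ∑ j, x i * Y i j * x j := by
  haveI : Nonempty (Fin g) := ⟨⟨0, hg⟩⟩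
  set Q : (Fin g → ℝ) → ℝ := fun x => ∑ i, ∑ j, x i * Y i j * x j with hQdef
  have hQpos : ∀ x : Fin g → ℝ, x ≠ 0 → 0 < Q x := by
    intro x hx
    have h := hY.dotProduct_mulVec_pos hx
    have he : dotProduct (star x) (Y.mulVec x) = Q x := by
      simp only [hQdef, dotProduct, Matrix.mulVec, star_trivial, Finset.mul_sum]
      exact Finset.sum_congr rfl fun i _ => Finset.sum_congr rfl fun j _ => by ring
    rwa [he] at h
  have hcont : Continuous Q := by
    apply continuous_finset_sum; intro i _
    apply continuous_finset_sum; intro j _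
    exact ((continuous_apply i).mul continuous_const).mul (continuous_apply j)
  obtain ⟨u, hu, hmin⟩ := (isCompact_sphere (0 : Fin g → ℝ) 1).exists_isMinOn
    (NormedSpace.sphere_nonempty.mpr zero_le_one) hcont.continuousOn
  have hu1 : ‖u‖ = 1 := by simpa using hu
  have hu0 : u ≠ 0 := by
    intro h; rw [h] at hu1; simp at hu1
  have hε₀ : 0 < Q u := hQpos u hu0
  have hg0 : (0:ℝ) < g := by exact_mod_cast hg
  refine ⟨Q u / g, by positivity, ?_⟩
  intro x
  rcases eq_or_ne x 0 with rfl | hx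
  · simp [hQdef]
  · have hxn : 0 < ‖x‖ := norm_pos_iff.mpr hx
    set u' : Fin g → ℝ := ‖x‖⁻¹ • x with hu'def
    have hu'1 : ‖u'‖ = 1 := by
      rw [hu'def, norm_smul, norm_inv, norm_norm]
      field_simp
    have hmem : u' ∈ Metric.sphere (0 : Fin g → ℝ) 1 := by
      simpa using hu'1
    have hsc : ∀ (c : ℝ) (y : Fin g → ℝ), Q (c • y) = c ^ 2 * Q y := by
      intro c y
      simp only [hQdef, Finset.mul_sum, Pi.smul_apply, smul_eq_mul]
      exact Finset.sum_congr rfl fun i _ => Finset.sum_congr rfl fun j _ => by ring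
    have hx' : x = ‖x‖ • u' := by
      rw [hu'def, smul_smul, mul_inv_cancel₀ hxn.ne', one_smul]
    have hQx : Q x = ‖x‖ ^ 2 * Q u' := by
      conv_lhs => rw [hx']
      exact hsc _ _
    have h1 : Q u ≤ Q u' := hmin hmem
    have h2 : ∑ i, x i ^ 2 ≤ (g : ℝ) * ‖x‖ ^ 2 := by
      calc ∑ i, x i ^ 2 ≤ ∑ _i : Fin g, ‖x‖ ^ 2 := by
            refine Finset.sum_le_sum fun i _ => ?_
            have hni := norm_le_pi_norm x i
            have : |x i| ≤ ‖x‖ := by simpa using hni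
            nlinarith [abs_nonneg (x i), _root_.sq_abs (x i)]
        _ = (g : ℝ) * ‖x‖ ^ 2 := by
            rw [Finset.sum_const, Finset.card_univ, Fintype.card_fin, nsmul_eq_mul]
    calc Q u / g * ∑ i, x i ^ 2 ≤ Q u / g * ((g : ℝ) * ‖x‖ ^ 2) := by
          apply mul_le_mul_of_nonneg_left h2 (by positivity)
      _ = Q u * ‖x‖ ^ 2 := by field_simp
      _ ≤ Q u' * ‖x‖ ^ 2 := by nlinarith [sq_nonneg ‖x‖]
      _ = Q x := by rw [hQx]; ring

open scoped Classical

/-- The `θ[2a, α+γ]`-type series term. -/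
noncomputable def AA (τ : Matrix (Fin g) (Fin g) ℂ) (b c0 c : Fin g → Bool) :
    (Fin g → ℤ) → ℂ :=
  tt τ (fun i => 2 * halfChar b i) (fun i => halfChar c0 i + halfChar c i)

/-- The `θ[0, -γ]`-type series term. -/
noncomputable def BB (τ : Matrix (Fin g) (Fin g) ℂ) (c : Fin g → Bool) :
    (Fin g → ℤ) → ℂ :=
  tt τ 0 (fun i => -(halfChar c i))

/-- The unimodular factor. -/
noncomputable def ee (b c : Fin g → Bool) : ℂ :=
  Complex.exp (-(2 * (Real.pi : ℂ) * Complex.I) *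
    ∑ i, 2 * (halfChar b i : ℂ) * (halfChar c i : ℂ))

/-- The generic product term. -/
noncomputable def GG (τ : Matrix (Fin g) (Fin g) ℂ) (b c0 : Fin g → Bool)
    (p q : Fin g → ℤ) : ℂ :=
  Complex.exp ((Real.pi : ℂ) * Complex.I *
      (qf τ (fun i => (p i : ℂ) + 2 * (halfChar b i : ℂ)) + qf τ (fun i => (q i : ℂ)))
    + 2 * (Real.pi : ℂ) * Complex.I *
      ∑ i, ((p i : ℂ) + 2 * (halfChar b i : ℂ)) * (halfChar c0 i : ℂ))

lemma qf_smul (τ : Matrix (Fin g) (Fin g) ℂ) (x : Fin g → ℂ) :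
    qf ((2 : ℂ) • τ) x = 2 * qf τ x := by
  rw [qf, qf, Finset.mul_sum]
  refine Finset.sum_congr rfl fun i _ => ?_
  rw [Finset.mul_sum]
  refine Finset.sum_congr rfl fun j _ => ?_
  simp only [Matrix.smul_apply, smul_eq_mul]
  ring

lemma hGf (τ : Matrix (Fin g) (Fin g) ℂ) (b c0 : Fin g → Bool) (n m : Fin g → ℤ) :
    tt ((2 : ℂ) • τ) (halfChar b) (halfChar c0) n * tt ((2 : ℂ) • τ) (halfChar b) (halfChar c0) m
      = GG τ b c0 (n + m) (n - m) := by
  simp only [tt, GG]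
  rw [← Complex.exp_add]
  congr 1
  have hpar : qf τ (fun i => (((n + m) i : ℤ) : ℂ) + 2 * (halfChar b i : ℂ))
        + qf τ (fun i => (((n - m) i : ℤ) : ℂ))
      = 2 * qf τ (fun i => (n i : ℂ) + (halfChar b i : ℂ))
        + 2 * qf τ (fun i => (m i : ℂ) + (halfChar b i : ℂ)) := by
    rw [qf, qf, qf, qf, Finset.mul_sum, Finset.mul_sum, ← Finset.sum_add_distrib,
      ← Finset.sum_add_distrib]
    refine Finset.sum_congr rfl fun i _ => ?_
    rw [Finset.mul_sum, Finset.mul_sum, ← Finset.sum_add_distrib, ← Finset.sum_add_distrib]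
    refine Finset.sum_congr rfl fun j _ => ?_
    simp only [Pi.add_apply, Pi.sub_apply]
    push_cast
    ring
  have hsm1 : qf ((2 : ℂ) • τ) (fun i => (n i : ℂ) + (halfChar b i : ℂ))
      = 2 * qf τ (fun i => (n i : ℂ) + (halfChar b i : ℂ)) := qf_smul τ _
  have hsm2 : qf ((2 : ℂ) • τ) (fun i => (m i : ℂ) + (halfChar b i : ℂ))
      = 2 * qf τ (fun i => (m i : ℂ) + (halfChar b i : ℂ)) := qf_smul τ _
  have hlin : ∑ i, ((((n + m) i : ℤ) : ℂ) + 2 * (halfChar b i : ℂ)) * (halfChar c0 i : ℂ)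
      = (∑ i, ((n i : ℂ) + (halfChar b i : ℂ)) * (halfChar c0 i : ℂ))
        + ∑ i, ((m i : ℂ) + (halfChar b i : ℂ)) * (halfChar c0 i : ℂ) := by
    rw [← Finset.sum_add_distrib]
    refine Finset.sum_congr rfl fun i _ => ?_
    simp only [Pi.add_apply]
    push_cast
    ring
  linear_combination ((Real.pi : ℂ) * Complex.I) * hsm1 + ((Real.pi : ℂ) * Complex.I) * hsm2
    - ((Real.pi : ℂ) * Complex.I) * hpar - (2 * (Real.pi : ℂ) * Complex.I) * hlin

lemma hterm (τ : Matrix (Fin g) (Fin g) ℂ) (b c0 c : Fin g → Bool) (p q : Fin g → ℤ) :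
    ee b c * AA τ b c0 c p * BB τ c q
      = GG τ b c0 p q * ∏ i, (if c i then
          Complex.exp ((Real.pi : ℂ) * Complex.I * ((p i : ℂ) - (q i : ℂ))) else 1) := by
  simp only [ee, AA, BB, GG, tt]
  have hprod : (∏ i, (if c i then
        Complex.exp ((Real.pi : ℂ) * Complex.I * ((p i : ℂ) - (q i : ℂ))) else 1))
      = Complex.exp (∑ i, if c i then
          (Real.pi : ℂ) * Complex.I * ((p i : ℂ) - (q i : ℂ)) else 0) := by
    rw [Complex.exp_sum]
    refine Finset.prod_congr rfl fun i _ => ?_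
    by_cases h : c i <;> simp [h]
  rw [hprod, ← Complex.exp_add, ← Complex.exp_add, ← Complex.exp_add]
  congr 1
  have hq0 : qf τ (fun i => (q i : ℂ) + (((0 : Fin g → ℝ) i : ℝ) : ℂ))
      = qf τ (fun i => (q i : ℂ)) := by
    congr 1
    funext i
    simp
  have key : (-(2 * (Real.pi : ℂ) * Complex.I)) *
          (∑ i, 2 * (halfChar b i : ℂ) * (halfChar c i : ℂ))
        + 2 * (Real.pi : ℂ) * Complex.I *
          (∑ i, ((p i : ℂ) + ((2 * halfChar b i : ℝ) : ℂ)) * ((halfChar c0 i + halfChar c i : ℝ) : ℂ))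
        + 2 * (Real.pi : ℂ) * Complex.I *
          (∑ i, ((q i : ℂ) + (((0 : Fin g → ℝ) i : ℝ) : ℂ)) * ((-(halfChar c i) : ℝ) : ℂ))
      = 2 * (Real.pi : ℂ) * Complex.I *
          (∑ i, ((p i : ℂ) + 2 * (halfChar b i : ℂ)) * (halfChar c0 i : ℂ))
        + ∑ i, (if c i then (Real.pi : ℂ) * Complex.I * ((p i : ℂ) - (q i : ℂ)) else 0) := by
    simp only [Finset.mul_sum, ← Finset.sum_add_distrib]
    refine Finset.sum_congr rfl fun i _ => ?_
    simp only [Pi.zero_apply]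
    by_cases h : c i
    · simp only [halfChar, h, if_true]
      push_cast
      ring
    · simp only [halfChar, h, if_false]
      push_cast
      ring
  have hqP : qf τ (fun i => (p i : ℂ) + ((2 * halfChar b i : ℝ) : ℂ))
      = qf τ (fun i => (p i : ℂ) + 2 * (halfChar b i : ℂ)) := by
    congr 1
    funext i
    push_cast
    ring
  linear_combination key + ((Real.pi : ℂ) * Complex.I) * hq0
    + ((Real.pi : ℂ) * Complex.I) * hqP

lemma ortho (τ : Matrix (Fin g) (Fin g) ℂ) (b c0 : Fin g → Bool) (p q : Fin g → ℤ) :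
    ∑ c : Fin g → Bool, ee b c * AA τ b c0 c p * BB τ c q
      = if (∀ i, Even (p i - q i)) then (2 ^ g : ℂ) * GG τ b c0 p q else 0 := by
  have h1 : ∑ c : Fin g → Bool, ee b c * AA τ b c0 c p * BB τ c q
      = GG τ b c0 p q * ∑ c : Fin g → Bool, ∏ i, (if c i then
          Complex.exp ((Real.pi : ℂ) * Complex.I * ((p i : ℂ) - (q i : ℂ))) else 1) := by
    rw [Finset.mul_sum]
    exact Finset.sum_congr rfl fun c _ => hterm τ b c0 c p q
  have h2 : ∑ c : Fin g → Bool, ∏ i, (if c i then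
        Complex.exp ((Real.pi : ℂ) * Complex.I * ((p i : ℂ) - (q i : ℂ))) else 1)
      = ∏ i, (Complex.exp ((Real.pi : ℂ) * Complex.I * ((p i : ℂ) - (q i : ℂ))) + 1) := by
    have h2' := Finset.prod_univ_sum (fun _ : Fin g => (Finset.univ : Finset Bool))
      (fun i x => if x then
        Complex.exp ((Real.pi : ℂ) * Complex.I * ((p i : ℂ) - (q i : ℂ))) else 1)
    rw [Fintype.piFinset_univ] at h2'
    refine h2'.symm.trans ?_
    refine Finset.prod_congr rfl fun i _ => ?_
    rw [Fintype.sum_bool]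
    simp
  rw [h1, h2]
  by_cases h : ∀ i, Even (p i - q i)
  · rw [if_pos h]
    have h3 : ∀ i : Fin g,
        Complex.exp ((Real.pi : ℂ) * Complex.I * ((p i : ℂ) - (q i : ℂ))) + 1 = 2 := by
      intro i
      obtain ⟨k, hk⟩ := h i
      have hx : (Real.pi : ℂ) * Complex.I * ((p i : ℂ) - (q i : ℂ))
          = (k : ℂ) * (2 * (Real.pi : ℂ) * Complex.I) := by
        have hc := congrArg (fun z : ℤ => (z : ℂ)) hk
        push_cast at hc
        linear_combination ((Real.pi : ℂ) * Complex.I) * hc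
      rw [hx, Complex.exp_int_mul_two_pi_mul_I]
      norm_num
    rw [Finset.prod_congr rfl fun i _ => h3 i, Finset.prod_const, Finset.card_univ,
      Fintype.card_fin]
    ring
  · rw [if_neg h]
    push_neg at h
    obtain ⟨i0, hi0⟩ := h
    have h4 : Complex.exp ((Real.pi : ℂ) * Complex.I * ((p i0 : ℂ) - (q i0 : ℂ))) + 1 = 0 := by
      obtain ⟨k, hk⟩ := Int.not_even_iff_odd.mp hi0
      have hx : (Real.pi : ℂ) * Complex.I * ((p i0 : ℂ) - (q i0 : ℂ))
          = (k : ℂ) * (2 * (Real.pi : ℂ) * Complex.I) + (Real.pi : ℂ) * Complex.I := by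
        have hc := congrArg (fun z : ℤ => (z : ℂ)) hk
        push_cast at hc
        linear_combination ((Real.pi : ℂ) * Complex.I) * hc
      rw [hx, Complex.exp_add, Complex.exp_int_mul_two_pi_mul_I, one_mul,
        Complex.exp_pi_mul_I]
      ring
    rw [Finset.prod_eq_zero (Finset.mem_univ i0) h4, mul_zero]

lemma tsum_AA (τ : Matrix (Fin g) (Fin g) ℂ) (b c0 c : Fin g → Bool) :
    (∑' p : Fin g → ℤ, AA τ b c0 c p)
      = thetaChar (halfChar (fun _ => false)) (halfChar (fun i => xor (c0 i) (c i))) τ 0 := by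
  rw [thetaChar_eq,
    show (halfChar (fun _ : Fin g => false)) = (0 : Fin g → ℝ) from
      funext fun i => by simp [halfChar]]
  set kb : Fin g → ℤ := fun i => if b i then 1 else 0 with hkb
  have h1 : ∀ p : Fin g → ℤ, AA τ b c0 c p
      = tt τ 0 (fun i => halfChar c0 i + halfChar c i) (p + kb) := by
    intro p
    simp only [AA, tt]
    have harg : ∀ i : Fin g, (p i : ℂ) + ((2 * halfChar b i : ℝ) : ℂ)
        = (((p + kb) i : ℤ) : ℂ) + (((0 : Fin g → ℝ) i : ℝ) : ℂ) := by
      intro i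
      simp only [Pi.add_apply, Pi.zero_apply, hkb, halfChar]
      by_cases h : b i <;> simp [h] <;> push_cast <;> ring
    have hql : qf τ (fun i => (p i : ℂ) + ((2 * halfChar b i : ℝ) : ℂ))
        = qf τ (fun i => (((p + kb) i : ℤ) : ℂ) + (((0 : Fin g → ℝ) i : ℝ) : ℂ)) := by
      congr 1
      exact funext harg
    have hll : ∑ i, ((p i : ℂ) + ((2 * halfChar b i : ℝ) : ℂ))
          * ((halfChar c0 i + halfChar c i : ℝ) : ℂ)
        = ∑ i, ((((p + kb) i : ℤ) : ℂ) + (((0 : Fin g → ℝ) i : ℝ) : ℂ))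
          * ((halfChar c0 i + halfChar c i : ℝ) : ℂ) := by
      refine Finset.sum_congr rfl fun i _ => ?_
      rw [harg i]
    rw [hql, hll]
  rw [tsum_congr h1]
  have h2 : ∑' p : Fin g → ℤ, tt τ 0 (fun i => halfChar c0 i + halfChar c i) (p + kb)
      = ∑' s : Fin g → ℤ, tt τ 0 (fun i => halfChar c0 i + halfChar c i) s := by
    calc ∑' p : Fin g → ℤ, tt τ 0 (fun i => halfChar c0 i + halfChar c i) (p + kb)
        = ∑' p : Fin g → ℤ, tt τ 0 (fun i => halfChar c0 i + halfChar c i)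
            ((Equiv.addRight kb) p) := by
          exact tsum_congr fun p => by rw [Equiv.coe_addRight]
      _ = _ := (Equiv.addRight kb).tsum_eq _
  rw [h2]
  refine tsum_congr fun s => ?_
  simp only [tt]
  set tc : Fin g → ℤ := fun i => if (c0 i && c i) then 1 else 0 with htc
  have hsum : ∑ i, ((s i : ℂ) + (((0 : Fin g → ℝ) i : ℝ) : ℂ))
        * ((halfChar c0 i + halfChar c i : ℝ) : ℂ)
      = (∑ i, ((s i : ℂ) + (((0 : Fin g → ℝ) i : ℝ) : ℂ))
          * ((halfChar (fun i => xor (c0 i) (c i)) i : ℝ) : ℂ))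
        + ∑ i, (s i : ℂ) * (tc i : ℂ) := by
    rw [← Finset.sum_add_distrib]
    refine Finset.sum_congr rfl fun i _ => ?_
    simp only [Pi.zero_apply, htc, halfChar]
    by_cases h1 : c0 i <;> by_cases h2 : c i <;> simp [h1, h2] <;> push_cast <;> ring
  have hK : ((∑ i, s i * tc i : ℤ) : ℂ) = ∑ i, (s i : ℂ) * (tc i : ℂ) := by push_cast; ring
  have hexp : (Real.pi : ℂ) * Complex.I
        * qf τ (fun i => (s i : ℂ) + (((0 : Fin g → ℝ) i : ℝ) : ℂ))
        + 2 * (Real.pi : ℂ) * Complex.I * ∑ i, ((s i : ℂ) + (((0 : Fin g → ℝ) i : ℝ) : ℂ))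
          * ((halfChar c0 i + halfChar c i : ℝ) : ℂ)
      = ((Real.pi : ℂ) * Complex.I
          * qf τ (fun i => (s i : ℂ) + (((0 : Fin g → ℝ) i : ℝ) : ℂ))
        + 2 * (Real.pi : ℂ) * Complex.I * ∑ i, ((s i : ℂ) + (((0 : Fin g → ℝ) i : ℝ) : ℂ))
          * ((halfChar (fun i => xor (c0 i) (c i)) i : ℝ) : ℂ))
        + ((∑ i, s i * tc i : ℤ) : ℂ) * (2 * (Real.pi : ℂ) * Complex.I) := by
    rw [hK]
    linear_combination (2 * (Real.pi : ℂ) * Complex.I) * hsum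
  rw [hexp, Complex.exp_add, Complex.exp_int_mul_two_pi_mul_I, mul_one]

lemma tsum_BB (τ : Matrix (Fin g) (Fin g) ℂ) (c : Fin g → Bool) :
    (∑' q : Fin g → ℤ, BB τ c q)
      = thetaChar (halfChar (fun _ => false)) (halfChar c) τ 0 := by
  rw [thetaChar_eq,
    show (halfChar (fun _ : Fin g => false)) = (0 : Fin g → ℝ) from
      funext fun i => by simp [halfChar]]
  refine tsum_congr fun q => ?_
  simp only [BB, tt]
  set tc : Fin g → ℤ := fun i => if c i then 1 else 0 with htc
  have hsum : ∑ i, ((q i : ℂ) + (((0 : Fin g → ℝ) i : ℝ) : ℂ)) * ((-(halfChar c i) : ℝ) : ℂ)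
      = (∑ i, ((q i : ℂ) + (((0 : Fin g → ℝ) i : ℝ) : ℂ)) * ((halfChar c i : ℝ) : ℂ))
        + ∑ i, (q i : ℂ) * (-(tc i) : ℂ) := by
    rw [← Finset.sum_add_distrib]
    refine Finset.sum_congr rfl fun i _ => ?_
    simp only [Pi.zero_apply, htc, halfChar]
    by_cases h : c i <;> simp [h] <;> push_cast <;> ring
  have hK : ((∑ i, q i * (-(tc i)) : ℤ) : ℂ) = ∑ i, (q i : ℂ) * (-(tc i) : ℂ) := by
    push_cast; ring
  have hexp : (Real.pi : ℂ) * Complex.I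
        * qf τ (fun i => (q i : ℂ) + (((0 : Fin g → ℝ) i : ℝ) : ℂ))
        + 2 * (Real.pi : ℂ) * Complex.I * ∑ i, ((q i : ℂ) + (((0 : Fin g → ℝ) i : ℝ) : ℂ))
          * ((-(halfChar c i) : ℝ) : ℂ)
      = ((Real.pi : ℂ) * Complex.I
          * qf τ (fun i => (q i : ℂ) + (((0 : Fin g → ℝ) i : ℝ) : ℂ))
        + 2 * (Real.pi : ℂ) * Complex.I * ∑ i, ((q i : ℂ) + (((0 : Fin g → ℝ) i : ℝ) : ℂ))
          * ((halfChar c i : ℝ) : ℂ))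
        + ((∑ i, q i * (-(tc i)) : ℤ) : ℂ) * (2 * (Real.pi : ℂ) * Complex.I) := by
    rw [hK]
    linear_combination (2 * (Real.pi : ℂ) * Complex.I) * hsum
  rw [hexp, Complex.exp_add, Complex.exp_int_mul_two_pi_mul_I, mul_one]

lemma abs_ee (b c : Fin g → Bool) : ‖ee b c‖ = 1 := by
  rw [ee, Complex.norm_exp]
  have hS : (∑ i, 2 * (halfChar b i : ℂ) * (halfChar c i : ℂ))
      = ((∑ i, 2 * halfChar b i * halfChar c i : ℝ) : ℂ) := by
    push_cast; ring
  rw [hS]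
  rw [show (-(2 * (Real.pi : ℂ) * Complex.I)
      * ((∑ i, 2 * halfChar b i * halfChar c i : ℝ) : ℂ)).re = 0 by
    simp [Complex.mul_re, Complex.mul_im]]
  exact Real.exp_zero

set_option maxHeartbeats 1000000 in
lemma key (τ : Matrix (Fin g) (Fin g) ℂ) {ε : ℝ} (hε : 0 < ε)
    (hq : ∀ x : Fin g → ℝ, ε * ∑ i, x i ^ 2 ≤ ∑ i, ∑ j, x i * (τ i j).im * x j)
    (b c0 : Fin g → Bool) :
    thetaChar (halfChar b) (halfChar c0) ((2 : ℂ) • τ) 0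
        * thetaChar (halfChar b) (halfChar c0) ((2 : ℂ) • τ) 0
      = (2 ^ g : ℂ)⁻¹ * ∑ c : Fin g → Bool,
          ee b c * (∑' p : Fin g → ℤ, AA τ b c0 c p) * (∑' q : Fin g → ℤ, BB τ c q) := by
  have hq2 : ∀ x : Fin g → ℝ, ε * ∑ i, x i ^ 2
      ≤ ∑ i, ∑ j, x i * ((((2 : ℂ) • τ) i j).im) * x j := by
    intro x
    have h0 : (0:ℝ) ≤ ∑ i, x i ^ 2 := Finset.sum_nonneg fun i _ => sq_nonneg _
    have he : ∑ i, ∑ j, x i * ((((2 : ℂ) • τ) i j).im) * x j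
        = 2 * ∑ i, ∑ j, x i * (τ i j).im * x j := by
      rw [Finset.mul_sum]
      refine Finset.sum_congr rfl fun i _ => ?_
      rw [Finset.mul_sum]
      refine Finset.sum_congr rfl fun j _ => ?_
      have him : (((2 : ℂ) • τ) i j).im = 2 * (τ i j).im := by
        simp [Matrix.smul_apply, Complex.mul_im]
      rw [him]; ring
    rw [he]
    nlinarith [hq x, mul_nonneg hε.le h0]
  have hfs' : Summable fun n : Fin g → ℤ =>
      ‖tt ((2 : ℂ) • τ) (halfChar b) (halfChar c0) n‖ := by
    simpa using
      summable_norm_tt ((2 : ℂ) • τ) hε hq2 (halfChar b) (halfChar c0)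
  have hA' : ∀ c : Fin g → Bool, Summable fun p : Fin g → ℤ => ‖AA τ b c0 c p‖ := by
    intro c
    simpa [AA] using
      summable_norm_tt τ hε hq (fun i => 2 * halfChar b i)
        (fun i => halfChar c0 i + halfChar c i)
  have hB' : ∀ c : Fin g → Bool, Summable fun q : Fin g → ℤ => ‖BB τ c q‖ := by
    intro c
    simpa [BB] using
      summable_norm_tt τ hε hq 0 (fun i => -(halfChar c i))
  have hsummand : ∀ c : Fin g → Bool,
      Summable fun pq : (Fin g → ℤ) × (Fin g → ℤ) =>
        ee b c * AA τ b c0 c pq.1 * BB τ c pq.2 := by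
    intro c
    have h := summable_mul_of_summable_norm (hA' c) (hB' c)
    exact (h.mul_left (ee b c)).congr fun z => (mul_assoc _ _ _).symm
  rw [thetaChar_eq, tsum_mul_tsum_of_summable_norm hfs' hfs']
  rw [tsum_congr (fun z : (Fin g → ℤ) × (Fin g → ℤ) => hGf τ b c0 z.1 z.2)]
  set φ : (Fin g → ℤ) × (Fin g → ℤ) → (Fin g → ℤ) × (Fin g → ℤ) :=
    fun nm => (nm.1 + nm.2, nm.1 - nm.2) with hφ
  set H : (Fin g → ℤ) × (Fin g → ℤ) → ℂ := fun pq =>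
    if (∀ i, Even (pq.1 i - pq.2 i)) then (2 ^ g : ℂ) * GG τ b c0 pq.1 pq.2 else 0 with hH
  have hφinj : Function.Injective φ := by
    rintro ⟨n1, m1⟩ ⟨n2, m2⟩ h
    simp only [hφ, Prod.mk.injEq] at h
    obtain ⟨h1, h2⟩ := h
    rw [Prod.mk.injEq]
    constructor <;> funext i
    · have e1 := congrFun h1 i
      have e2 := congrFun h2 i
      simp only [Pi.add_apply, Pi.sub_apply] at e1 e2
      omega
    · have e1 := congrFun h1 i
      have e2 := congrFun h2 i
      simp only [Pi.add_apply, Pi.sub_apply] at e1 e2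
      omega
  have hsupp : Function.support H ⊆ Set.range φ := by
    rintro ⟨p1, p2⟩ hpq
    by_cases hc : ∀ i, Even (p1 i - p2 i)
    · refine ⟨(fun i => p2 i + (hc i).choose, fun i => (hc i).choose), ?_⟩
      have hch : ∀ i, p1 i - p2 i = (hc i).choose + (hc i).choose :=
        fun i => (hc i).choose_spec
      simp only [hφ, Prod.mk.injEq]
      constructor <;> funext i <;> simp only [Pi.add_apply, Pi.sub_apply] <;>
        (have := hch i; omega)
    · exfalso
      apply hpq
      simp only [hH, if_neg hc]
  have h3 : ∑' nm : (Fin g → ℤ) × (Fin g → ℤ), GG τ b c0 (nm.1 + nm.2) (nm.1 - nm.2)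
      = (2 ^ g : ℂ)⁻¹ * ∑' pq : (Fin g → ℤ) × (Fin g → ℤ), H pq := by
    rw [← hφinj.tsum_eq hsupp]
    have hHφ : ∀ nm : (Fin g → ℤ) × (Fin g → ℤ),
        H (φ nm) = (2 ^ g : ℂ) * GG τ b c0 (nm.1 + nm.2) (nm.1 - nm.2) := by
      intro nm
      simp only [hH, hφ]
      rw [if_pos]
      intro i
      simp only [Pi.add_apply, Pi.sub_apply]
      exact ⟨nm.2 i, by ring⟩
    rw [tsum_congr hHφ, tsum_mul_left, ← mul_assoc,
      inv_mul_cancel₀ (pow_ne_zero g (two_ne_zero : (2 : ℂ) ≠ 0)), one_mul]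
  rw [h3]
  congr 1
  have h4 : ∀ pq : (Fin g → ℤ) × (Fin g → ℤ),
      H pq = ∑ c : Fin g → Bool, ee b c * AA τ b c0 c pq.1 * BB τ c pq.2 := by
    intro pq
    rw [hH]
    exact (ortho τ b c0 pq.1 pq.2).symm
  rw [tsum_congr h4, Summable.tsum_finsetSum (fun c _ => hsummand c)]
  refine Finset.sum_congr rfl fun c _ => ?_
  rw [tsum_congr (fun pq : (Fin g → ℤ) × (Fin g → ℤ) =>
      mul_assoc (ee b c) (AA τ b c0 c pq.1) (BB τ c pq.2)),
    tsum_mul_left, ← tsum_mul_tsum_of_summable_norm (hA' c) (hB' c), mul_assoc]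

end ThetaDup

/-- `F(τ) = max_{(m₁,m₂)∈{0,1/2}^{2g}} |θ_{(m₁,m₂)}(τ,0)|` satisfies
`F(τ) ≥ F(2τ)` for every `τ` in the Siegel upper half space. -/
theorem thetaNullwerte_max_duplication (g : ℕ) (hg : 1 ≤ g)
    (τ : Matrix (Fin g) (Fin g) ℂ) (hsym : τ.IsSymm)
    (hpos : (Matrix.of fun i j => (τ i j).im).PosDef) :
    (Finset.univ.sup' Finset.univ_nonempty
        fun p : (Fin g → Bool) × (Fin g → Bool) =>
          ‖thetaChar (halfChar p.1) (halfChar p.2) ((2 : ℂ) • τ) 0‖)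
      ≤ Finset.univ.sup' Finset.univ_nonempty
        fun p : (Fin g → Bool) × (Fin g → Bool) =>
          ‖thetaChar (halfChar p.1) (halfChar p.2) τ 0‖ := by
  classical
  obtain ⟨p0, -, hp0⟩ := Finset.exists_mem_eq_sup' Finset.univ_nonempty
    (fun p : (Fin g → Bool) × (Fin g → Bool) =>
      ‖thetaChar (halfChar p.1) (halfChar p.2) ((2 : ℂ) • τ) 0‖)
  rw [hp0]
  obtain ⟨ε, hε, hq⟩ := ThetaDup.posdef_bound hg (Matrix.of fun i j => (τ i j).im) hpos
  simp only [Matrix.of_apply] at hq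
  set M := Finset.univ.sup' Finset.univ_nonempty
    (fun p : (Fin g → Bool) × (Fin g → Bool) =>
      ‖thetaChar (halfChar p.1) (halfChar p.2) τ 0‖) with hM
  have hM0 : 0 ≤ M := le_trans (norm_nonneg _)
    (Finset.le_sup' (fun p : (Fin g → Bool) × (Fin g → Bool) =>
      ‖thetaChar (halfChar p.1) (halfChar p.2) τ 0‖) (Finset.mem_univ p0))
  have hkey := ThetaDup.key τ hε hq p0.1 p0.2
  have hbound : ∀ c : Fin g → Bool,
      ‖ThetaDup.ee p0.1 c * (∑' p : Fin g → ℤ, ThetaDup.AA τ p0.1 p0.2 c p)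
        * (∑' q : Fin g → ℤ, ThetaDup.BB τ c q)‖ ≤ M * M := by
    intro c
    rw [norm_mul, norm_mul, ThetaDup.abs_ee, one_mul, ThetaDup.tsum_AA, ThetaDup.tsum_BB]
    have h1 : ‖thetaChar (halfChar (fun _ => false))
        (halfChar (fun i => xor (p0.2 i) (c i))) τ 0‖ ≤ M :=
      Finset.le_sup' (fun p : (Fin g → Bool) × (Fin g → Bool) =>
        ‖thetaChar (halfChar p.1) (halfChar p.2) τ 0‖)
        (Finset.mem_univ ((fun _ => false), fun i => xor (p0.2 i) (c i)))
    have h2 : ‖thetaChar (halfChar (fun _ => false)) (halfChar c) τ 0‖ ≤ M :=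
      Finset.le_sup' (fun p : (Fin g → Bool) × (Fin g → Bool) =>
        ‖thetaChar (halfChar p.1) (halfChar p.2) τ 0‖)
        (Finset.mem_univ ((fun _ => false), c))
    exact mul_le_mul h1 h2 (norm_nonneg _) hM0
  have hcard : Fintype.card (Fin g → Bool) = 2 ^ g := by
    simp [Fintype.card_fun]
  have h2g : (0:ℝ) < 2 ^ g := by positivity
  have habs : ‖thetaChar (halfChar p0.1) (halfChar p0.2) ((2 : ℂ) • τ) 0‖ ^ 2
      ≤ M ^ 2 := by
    calc ‖thetaChar (halfChar p0.1) (halfChar p0.2) ((2 : ℂ) • τ) 0‖ ^ 2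
        = ‖thetaChar (halfChar p0.1) (halfChar p0.2) ((2 : ℂ) • τ) 0
            * thetaChar (halfChar p0.1) (halfChar p0.2) ((2 : ℂ) • τ) 0‖ := by
          rw [norm_mul, sq]
      _ = ‖(2 ^ g : ℂ)⁻¹ * ∑ c : Fin g → Bool,
            ThetaDup.ee p0.1 c * (∑' p : Fin g → ℤ, ThetaDup.AA τ p0.1 p0.2 c p)
              * (∑' q : Fin g → ℤ, ThetaDup.BB τ c q)‖ := by rw [hkey]
      _ ≤ ((2 : ℝ) ^ g)⁻¹ * ∑ c : Fin g → Bool,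
            ‖ThetaDup.ee p0.1 c * (∑' p : Fin g → ℤ, ThetaDup.AA τ p0.1 p0.2 c p)
              * (∑' q : Fin g → ℤ, ThetaDup.BB τ c q)‖ := by
          rw [norm_mul, norm_inv, norm_pow, Complex.norm_two]
          exact mul_le_mul_of_nonneg_left (norm_sum_le _ _) (by positivity)
      _ ≤ ((2 : ℝ) ^ g)⁻¹ * ∑ _c : Fin g → Bool, M * M := by
          exact mul_le_mul_of_nonneg_left (Finset.sum_le_sum fun c _ => hbound c)
            (by positivity)
      _ = M ^ 2 := by
          rw [Finset.sum_const, Finset.card_univ, hcard, nsmul_eq_mul]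
          push_cast
          field_simp
  nlinarith [norm_nonneg (thetaChar (halfChar p0.1) (halfChar p0.2) ((2 : ℂ) • τ) 0),
    hM0, habs]
end

section
/- For every τ ∈ 𝔖_g, the maximum over (m₁,m₂) ∈ {0,1/2}^{2g} of |θ_{(m₁,m₂)}(τ,0)| is at least 1. -/
open Complex Finset Function

namespace ThetaAux



variable {g : ℕ}

/-- complex quadratic form of τ -/
noncomputable def qC (τ : Matrix (Fin g) (Fin g) ℂ) (n : Fin g → ℤ) : ℂ :=
  ∑ i, ∑ j, (n i : ℂ) * τ i j * (n j : ℂ)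

/-- imaginary-part quadratic form -/
noncomputable def qR (τ : Matrix (Fin g) (Fin g) ℂ) (n : Fin g → ℤ) : ℝ :=
  ∑ i, ∑ j, (n i : ℝ) * (τ i j).im * (n j : ℝ)

/-- linear part for characteristic e -/
noncomputable def lr (e : Fin g → Bool) (n : Fin g → ℤ) : ℝ :=
  ∑ i, (n i : ℝ) * (if e i then (1/2 : ℝ) else 0)

noncomputable def gph (τ : Matrix (Fin g) (Fin g) ℂ) (t : ℝ) (n : Fin g → ℤ) : ℂ :=
  Complex.exp ((Real.pi : ℂ) * Complex.I * (t : ℂ) * qC τ n)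

noncomputable def sg (e : Fin g → Bool) (n : Fin g → ℤ) : ℂ :=
  Complex.exp (2 * (Real.pi : ℂ) * Complex.I * ((lr e n : ℝ) : ℂ))

noncomputable def trm (τ : Matrix (Fin g) (Fin g) ℂ) (t : ℝ) (e : Fin g → Bool)
    (n : Fin g → ℤ) : ℂ :=
  Complex.exp ((Real.pi : ℂ) * Complex.I * (t : ℂ) * qC τ n
    + 2 * (Real.pi : ℂ) * Complex.I * ((lr e n : ℝ) : ℂ))

noncomputable def T (τ : Matrix (Fin g) (Fin g) ℂ) (t : ℝ) (e : Fin g → Bool) : ℂ :=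
  ∑' n : Fin g → ℤ, trm τ t e n

lemma trm_eq_gph_mul_sg (τ : Matrix (Fin g) (Fin g) ℂ) (t : ℝ) (e : Fin g → Bool)
    (n : Fin g → ℤ) : trm τ t e n = gph τ t n * sg e n := by
  rw [trm, gph, sg, ← Complex.exp_add]

lemma qC_im (τ : Matrix (Fin g) (Fin g) ℂ) (n : Fin g → ℤ) : (qC τ n).im = qR τ n := by
  rw [qC, qR, Complex.im_sum]
  refine Finset.sum_congr rfl fun i _ => ?_
  rw [Complex.im_sum]
  refine Finset.sum_congr rfl fun j _ => ?_
  simp [Complex.mul_im, Complex.mul_re]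

lemma abs_trm (τ : Matrix (Fin g) (Fin g) ℂ) (t : ℝ) (e : Fin g → Bool) (n : Fin g → ℤ) :
    ‖trm τ t e n‖ = Real.exp (-(Real.pi * t) * qR τ n) := by
  rw [trm, Complex.norm_exp]
  congr 1
  have h1 : ((Real.pi : ℂ) * Complex.I * (t : ℂ) * qC τ n).re
      = -(Real.pi * t) * (qC τ n).im := by
    simp [Complex.mul_re, Complex.mul_im]
  have h2 : (2 * (Real.pi : ℂ) * Complex.I * ((lr e n : ℝ) : ℂ)).re = 0 := by
    simp [Complex.mul_re, Complex.mul_im]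
  rw [Complex.add_re, h1, h2, qC_im, add_zero]

lemma lr_add (e : Fin g → Bool) (x y : Fin g → ℤ) : lr e (x + y) = lr e x + lr e y := by
  rw [lr, lr, lr, ← Finset.sum_add_distrib]
  refine Finset.sum_congr rfl fun i _ => ?_
  push_cast [Pi.add_apply]
  ring

lemma sg_add (e : Fin g → Bool) (x y : Fin g → ℤ) : sg e (x + y) = sg e x * sg e y := by
  rw [sg, sg, sg, ← Complex.exp_add, lr_add]
  congr 1
  push_cast
  ring

lemma sg_mul_sg (b e : Fin g → Bool) (n : Fin g → ℤ) :
    sg b n * sg e n = sg (fun i => xor (b i) (e i)) n := by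
  rw [sg, sg, sg, ← Complex.exp_add]
  set J : ℤ := ∑ i, if b i && e i then n i else 0 with hJ
  have hlr : lr b n + lr e n
      = lr (fun i => xor (b i) (e i)) n + (J : ℝ) := by
    rw [lr, lr, lr, ← Finset.sum_add_distrib, hJ]
    push_cast
    rw [← Finset.sum_add_distrib]
    refine Finset.sum_congr rfl fun i _ => ?_
    cases hb : b i <;> cases he : e i <;> simp [hb, he] <;> ring
  have : 2 * (Real.pi : ℂ) * Complex.I * ((lr b n : ℝ) : ℂ)
        + 2 * (Real.pi : ℂ) * Complex.I * ((lr e n : ℝ) : ℂ)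
      = 2 * (Real.pi : ℂ) * Complex.I * ((lr (fun i => xor (b i) (e i)) n : ℝ) : ℂ)
        + (J : ℂ) * (2 * (Real.pi : ℂ) * Complex.I) := by
    rw [← mul_add, ← Complex.ofReal_add, hlr]
    push_cast
    ring
  rw [this, Complex.exp_add, Complex.exp_int_mul_two_pi_mul_I, mul_one]



variable {g : ℕ}


lemma exp_pi_int_even (u : ℤ) :
    Complex.exp ((Real.pi : ℂ) * Complex.I * ((2 * u : ℤ) : ℂ)) = 1 := by
  have : (Real.pi : ℂ) * Complex.I * ((2 * u : ℤ) : ℂ)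
      = (u : ℂ) * (2 * (Real.pi : ℂ) * Complex.I) := by push_cast; ring
  rw [this, Complex.exp_int_mul_two_pi_mul_I]

lemma exp_pi_int_odd {m : ℤ} (hm : Odd m) :
    Complex.exp ((Real.pi : ℂ) * Complex.I * (m : ℂ)) = -1 := by
  obtain ⟨l, hl⟩ := hm
  have : (Real.pi : ℂ) * Complex.I * (m : ℂ)
      = (l : ℂ) * (2 * (Real.pi : ℂ) * Complex.I) + (Real.pi : ℂ) * Complex.I := by
    rw [hl]; push_cast; ring
  rw [this, Complex.exp_add, Complex.exp_int_mul_two_pi_mul_I, one_mul,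
    Complex.exp_pi_mul_I]

/-- sum of sign characters -/
lemma sum_sg (w : Fin g → ℤ) :
    ∑ b : Fin g → Bool, sg b w
      = ∏ i, (1 + Complex.exp ((Real.pi : ℂ) * Complex.I * (w i : ℂ))) := by
  have hterm : ∀ b : Fin g → Bool, sg b w
      = ∏ i, (if b i then Complex.exp ((Real.pi : ℂ) * Complex.I * (w i : ℂ)) else 1) := by
    intro b
    rw [sg, lr]
    rw [Complex.ofReal_sum, Finset.mul_sum, Complex.exp_sum]
    refine Finset.prod_congr rfl fun i _ => ?_
    cases hb : b i <;> simp [hb]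
    · congr 1
      push_cast
      ring
  calc ∑ b : Fin g → Bool, sg b w
      = ∑ b ∈ Fintype.piFinset (fun _ : Fin g => (Finset.univ : Finset Bool)),
          ∏ i, (if b i then Complex.exp ((Real.pi : ℂ) * Complex.I * (w i : ℂ)) else 1) := by
        rw [Fintype.piFinset_univ]
        exact Finset.sum_congr rfl fun b _ => hterm b
    _ = ∏ i, ∑ s : Bool, (if s then Complex.exp ((Real.pi : ℂ) * Complex.I * (w i : ℂ)) else 1) := by
        rw [Finset.prod_univ_sum]
    _ = ∏ i, (1 + Complex.exp ((Real.pi : ℂ) * Complex.I * (w i : ℂ))) := by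
        refine Finset.prod_congr rfl fun i _ => ?_
        simp [Fintype.sum_bool, add_comm]

lemma sum_sg_even (u : Fin g → ℤ) :
    ∑ b : Fin g → Bool, sg b (2 * u) = (2 : ℂ) ^ g := by
  rw [sum_sg]
  have : ∀ i, (1 : ℂ) + Complex.exp ((Real.pi : ℂ) * Complex.I * ((2 * u) i : ℂ)) = 2 := by
    intro i
    have : ((2 * u) i : ℤ) = 2 * u i := rfl
    rw [this, exp_pi_int_even]
    norm_num
  rw [Finset.prod_congr rfl fun i _ => this i, Finset.prod_const]
  simp

lemma sum_sg_eq_zero {w : Fin g → ℤ} (hw : ¬ ∀ i, Even (w i)) :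
    ∑ b : Fin g → Bool, sg b w = 0 := by
  rw [sum_sg]
  push_neg at hw
  obtain ⟨i, hi⟩ := hw
  refine Finset.prod_eq_zero (Finset.mem_univ i) ?_
  rw [Int.not_even_iff_odd] at hi
  rw [exp_pi_int_odd hi]
  ring



variable {g : ℕ}


lemma exists_lam (hg : 1 ≤ g) (τ : Matrix (Fin g) (Fin g) ℂ)
    (hpos : (Matrix.of fun i j => (τ i j).im).PosDef) :
    ∃ lam : ℝ, 0 < lam ∧ ∀ n : Fin g → ℤ, lam * ∑ i, ((n i : ℝ)) ^ 2 ≤ qR τ n := by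
  classical
  set φ : EuclideanSpace ℝ (Fin g) → ℝ := fun x => ∑ i, ∑ j, x i * (τ i j).im * x j with hφ
  have hφval : ∀ x : EuclideanSpace ℝ (Fin g), φ x = ∑ i, ∑ j, x i * (τ i j).im * x j :=
    fun _ => rfl
  have hcont : Continuous φ := by
    refine continuous_finset_sum _ fun i _ => continuous_finset_sum _ fun j _ => ?_
    exact ((EuclideanSpace.proj i).continuous.mul continuous_const).mul
      (EuclideanSpace.proj j).continuous
  have hpos' : ∀ x : EuclideanSpace ℝ (Fin g), x ≠ 0 → 0 < φ x := by
    intro x hx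
    have hxv : (fun i => x i : Fin g → ℝ) ≠ 0 := by
      intro h
      apply hx
      ext i
      simpa using congrFun h i
    have h := hpos.dotProduct_mulVec_pos hxv
    have hsx : star (fun i => x i : Fin g → ℝ) = fun i => x i := by
      funext i; exact star_trivial _
    rw [hsx] at h
    have hdp : φ x = dotProduct (fun i => x i)
        ((Matrix.of fun i j => (τ i j).im).mulVec (fun i => x i)) := by
      rw [hφval]
      simp only [dotProduct, Matrix.mulVec, Matrix.of_apply, Finset.mul_sum]
      exact Finset.sum_congr rfl fun i _ => Finset.sum_congr rfl fun j _ => by ring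
    rw [← hdp] at h
    exact h
  -- compact sphere minimum
  have hne : (Metric.sphere (0 : EuclideanSpace ℝ (Fin g)) 1).Nonempty := by
    refine ⟨EuclideanSpace.single ⟨0, hg⟩ (1 : ℝ), ?_⟩
    simp [EuclideanSpace.norm_single]
  obtain ⟨x₀, hx₀S, hmin⟩ :=
    (isCompact_sphere (0 : EuclideanSpace ℝ (Fin g)) 1).exists_isMinOn hne
      hcont.continuousOn
  have hx₀norm : ‖x₀‖ = 1 := by simpa using hx₀S
  have hx₀ne : x₀ ≠ 0 := by
    intro h; rw [h] at hx₀norm; simp at hx₀norm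
  set lam := φ x₀ with hlam
  refine ⟨lam, hpos' x₀ hx₀ne, ?_⟩
  intro n
  by_cases hn : n = 0
  · subst hn
    simp [qR]
  · set xn : EuclideanSpace ℝ (Fin g) := WithLp.toLp 2 (fun i => (n i : ℝ)) with hxn
    have hxn_ne : xn ≠ 0 := by
      intro h
      apply hn
      funext i
      have h0 : ((n i : ℝ)) = 0 := by simpa [hxn] using congrArg (fun v : EuclideanSpace ℝ (Fin g) => v i) h
      have : n i = 0 := by exact_mod_cast h0
      simpa using this
    have hr : 0 < ‖xn‖ := norm_pos_iff.mpr hxn_ne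
    set u : EuclideanSpace ℝ (Fin g) := ‖xn‖⁻¹ • xn with hu
    have hu_mem : u ∈ Metric.sphere (0 : EuclideanSpace ℝ (Fin g)) 1 := by
      simp [hu, norm_smul, abs_of_pos (inv_pos.mpr hr), inv_mul_cancel₀ (ne_of_gt hr)]
    have hφu : φ u = ‖xn‖⁻¹ ^ 2 * φ xn := by
      rw [hφval, hφval, Finset.mul_sum]
      refine Finset.sum_congr rfl fun i _ => ?_
      rw [Finset.mul_sum]
      refine Finset.sum_congr rfl fun j _ => ?_
      have hui : ∀ k, u k = ‖xn‖⁻¹ * xn k := fun k => rfl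
      rw [hui, hui]
      ring
    have hmin_u : lam ≤ φ u := hmin hu_mem
    have hnorm_sq : ‖xn‖ ^ 2 = ∑ i, ((n i : ℝ)) ^ 2 := by
      rw [EuclideanSpace.norm_eq]
      rw [Real.sq_sqrt (by positivity)]
      refine Finset.sum_congr rfl fun i _ => ?_
      rw [Real.norm_eq_abs, _root_.sq_abs]
    have hφxn : φ xn = qR τ n := by
      rw [hφval, qR]
    have h2 : lam * ‖xn‖ ^ 2 ≤ φ xn := by
      rw [hφu] at hmin_u
      have h3 : lam * ‖xn‖ ^ 2 ≤ (‖xn‖⁻¹ ^ 2 * φ xn) * ‖xn‖ ^ 2 := by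
        apply mul_le_mul_of_nonneg_right hmin_u (by positivity)
      calc lam * ‖xn‖ ^ 2 ≤ (‖xn‖⁻¹ ^ 2 * φ xn) * ‖xn‖ ^ 2 := h3
        _ = φ xn := by field_simp
    rw [hnorm_sq, hφxn] at h2
    exact h2

lemma gauss1d {c : ℝ} (hc : 0 < c) : Summable fun a : ℤ => Real.exp (-c * (a : ℝ) ^ 2) := by
  have hr0 : (0 : ℝ) ≤ Real.exp (-c) := (Real.exp_pos _).le
  have hr1 : Real.exp (-c) < 1 := Real.exp_lt_one_iff.mpr (by linarith)
  have hgeom : Summable fun a : ℤ => Real.exp (-c) ^ a.natAbs := by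
    apply Summable.of_nat_of_neg
    · simpa using summable_geometric_of_lt_one hr0 hr1
    · simpa using summable_geometric_of_lt_one hr0 hr1
  refine Summable.of_nonneg_of_le (fun a => (Real.exp_pos _).le) (fun a => ?_) hgeom
  have h1 : Real.exp (-c) ^ a.natAbs = Real.exp (-c * a.natAbs) := by
    rw [← Real.exp_nat_mul]
    ring_nf
  rw [h1]
  apply Real.exp_le_exp.mpr
  have : (a.natAbs : ℝ) ≤ (a : ℝ) ^ 2 := by
    have h2 : (a.natAbs : ℤ) ≤ a ^ 2 := by
      rw [← Int.abs_eq_natAbs]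
      rcases eq_or_ne a 0 with h | h
      · simp [h]
      · have h1 : 1 ≤ |a| := Int.one_le_abs (by omega)
        calc |a| = |a| * 1 := by ring
          _ ≤ |a| * |a| := mul_le_mul_of_nonneg_left h1 (abs_nonneg a)
          _ = a ^ 2 := by rw [← sq, _root_.sq_abs]
    have h3 := (Int.cast_le (R := ℝ)).mpr h2
    push_cast at h3
    rw [Nat.cast_natAbs]
    exact_mod_cast h3
  nlinarith
lemma gaussSummable {c : ℝ} (hc : 0 < c) :
    ∀ m : ℕ, Summable fun n : Fin m → ℤ => Real.exp (-c * ∑ i, ((n i : ℝ)) ^ 2) := by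
  intro m
  induction m with
  | zero =>
      refine summable_of_ne_finset_zero (s := {(fun i => (0:ℤ) : Fin 0 → ℤ)}) ?_
      intro b hb
      exact absurd (Finset.mem_singleton.mpr (Subsingleton.elim b _)) hb
  | succ m ih =>
      rw [← (Fin.consEquiv (fun _ : Fin (m + 1) => ℤ)).summable_iff]
      have hfe : (fun n : Fin (m + 1) → ℤ => Real.exp (-c * ∑ i, ((n i : ℝ)) ^ 2))
            ∘ (Fin.consEquiv (fun _ : Fin (m + 1) => ℤ))
          = fun p : ℤ × (Fin m → ℤ) =>
              Real.exp (-c * (p.1 : ℝ) ^ 2) * Real.exp (-c * ∑ i, ((p.2 i : ℝ)) ^ 2) := by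
        funext p
        rcases p with ⟨a, q⟩
        simp only [Function.comp_apply, Fin.consEquiv_apply, Fin.sum_univ_succ, Fin.cons_zero,
          Fin.cons_succ]
        rw [← Real.exp_add]
        congr 1
        ring
      rw [hfe]
      exact Summable.mul_of_nonneg (f := fun a : ℤ => Real.exp (-c * (a : ℝ) ^ 2))
        (g := fun q : Fin m → ℤ => Real.exp (-c * ∑ i, ((q i : ℝ)) ^ 2))
        (gauss1d hc) ih (fun _ => (Real.exp_pos _).le) (fun _ => (Real.exp_pos _).le)



section Main

variable {g : ℕ} (τ : Matrix (Fin g) (Fin g) ℂ) {lam : ℝ}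

lemma qR_nonneg (hlam0 : 0 < lam)
    (hlam : ∀ n : Fin g → ℤ, lam * ∑ i, ((n i : ℝ)) ^ 2 ≤ qR τ n) (n : Fin g → ℤ) :
    0 ≤ qR τ n :=
  le_trans (by positivity) (hlam n)

lemma qR_ge_lam (hlam0 : 0 < lam)
    (hlam : ∀ n : Fin g → ℤ, lam * ∑ i, ((n i : ℝ)) ^ 2 ≤ qR τ n) {n : Fin g → ℤ}
    (hn : n ≠ 0) : lam ≤ qR τ n := by
  refine le_trans ?_ (hlam n)
  have hex : ∃ i, n i ≠ 0 := by
    by_contra h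
    push_neg at h
    exact hn (funext fun i => h i)
  obtain ⟨i, hi⟩ := hex
  have h1 : (1 : ℝ) ≤ ((n i : ℝ)) ^ 2 := by
    have : (1 : ℤ) ≤ (n i) ^ 2 := by nlinarith [sq_nonneg (n i), Int.one_le_abs hi, abs_nonneg (n i), _root_.sq_abs (n i)]
    exact_mod_cast this
  have h2 : (1 : ℝ) ≤ ∑ i, ((n i : ℝ)) ^ 2 :=
    le_trans h1 (Finset.single_le_sum (f := fun j => ((n j : ℝ)) ^ 2)
      (fun j _ => by positivity) (Finset.mem_univ i))
  nlinarith

lemma summable_abs_trm (hlam0 : 0 < lam)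
    (hlam : ∀ n : Fin g → ℤ, lam * ∑ i, ((n i : ℝ)) ^ 2 ≤ qR τ n) {t : ℝ} (ht : 1 ≤ t)
    (e : Fin g → Bool) : Summable fun n : Fin g → ℤ => ‖trm τ t e n‖ := by
  have heq : (fun n : Fin g → ℤ => ‖trm τ t e n‖)
      = fun n => Real.exp (-(Real.pi * t) * qR τ n) := by
    funext n
    rw [abs_trm]
  rw [heq]
  refine Summable.of_nonneg_of_le (fun n => (Real.exp_pos _).le) (fun n => ?_)
    (gaussSummable (c := Real.pi * lam) (by positivity) g)
  apply Real.exp_le_exp.mpr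
  have h1 : lam * ∑ i, ((n i : ℝ)) ^ 2 ≤ qR τ n := hlam n
  have h2 : qR τ n ≤ t * qR τ n := by
    nlinarith [qR_nonneg τ hlam0 hlam n]
  have hpi := Real.pi_pos
  nlinarith [qR_nonneg τ hlam0 hlam n]

lemma summable_trm (hlam0 : 0 < lam)
    (hlam : ∀ n : Fin g → ℤ, lam * ∑ i, ((n i : ℝ)) ^ 2 ≤ qR τ n) {t : ℝ} (ht : 1 ≤ t)
    (e : Fin g → Bool) : Summable fun n : Fin g → ℤ => trm τ t e n :=
  (summable_abs_trm τ hlam0 hlam ht e).of_norm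

lemma qC_par (u v : Fin g → ℤ) :
    qC τ (u + v) + qC τ (u - v) = 2 * qC τ u + 2 * qC τ v := by
  rw [qC, qC, qC, qC, ← Finset.sum_add_distrib, Finset.mul_sum, Finset.mul_sum,
    ← Finset.sum_add_distrib]
  refine Finset.sum_congr rfl fun i _ => ?_
  rw [← Finset.sum_add_distrib, Finset.mul_sum, Finset.mul_sum, ← Finset.sum_add_distrib]
  refine Finset.sum_congr rfl fun j _ => ?_
  simp only [Pi.add_apply, Pi.sub_apply]
  push_cast
  ring

lemma gph_par (t : ℝ) (u v : Fin g → ℤ) :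
    gph τ t (u + v) * gph τ t (u - v) = gph τ (2 * t) u * gph τ (2 * t) v := by
  rw [gph, gph, gph, gph, ← Complex.exp_add, ← Complex.exp_add]
  congr 1
  have h := qC_par τ u v
  push_cast
  linear_combination (↑Real.pi * Complex.I * (t : ℂ)) * h

/-- The key duplication identity. -/
lemma key (hlam0 : 0 < lam)
    (hlam : ∀ n : Fin g → ℤ, lam * ∑ i, ((n i : ℝ)) ^ 2 ≤ qR τ n) {t : ℝ} (ht : 1 ≤ t)
    (e : Fin g → Bool) :
    ∑ b : Fin g → Bool, T τ t (fun i => xor (b i) (e i)) * T τ t b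
      = T τ (2 * t) e ^ 2 * (2 : ℂ) ^ g := by
  classical
  have ht2 : (1 : ℝ) ≤ 2 * t := by linarith
  have hn : ∀ e' : Fin g → Bool, Summable fun n : Fin g → ℤ => ‖trm τ t e' n‖ :=
    fun e' => summable_abs_trm τ hlam0 hlam ht e'
  have hn2 : ∀ e' : Fin g → Bool, Summable fun n : Fin g → ℤ => ‖trm τ (2 * t) e' n‖ :=
    fun e' => summable_abs_trm τ hlam0 hlam ht2 e'
  -- G is the function on pairs appearing after exchanging the finite sum and the tsum
  set G : ((Fin g → ℤ) × (Fin g → ℤ)) → ℂ := fun p =>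
    gph τ t p.1 * gph τ t p.2 * sg e p.1 * ∑ b : Fin g → Bool, sg b (p.1 + p.2) with hG
  have step1 : ∀ b : Fin g → Bool,
      T τ t (fun i => xor (b i) (e i)) * T τ t b
        = ∑' p : (Fin g → ℤ) × (Fin g → ℤ),
            trm τ t (fun i => xor (b i) (e i)) p.1 * trm τ t b p.2 :=
    fun b => tsum_mul_tsum_of_summable_norm (hn _) (hn _)
  have hpoint : ∀ p : (Fin g → ℤ) × (Fin g → ℤ),
      (∑ b : Fin g → Bool, trm τ t (fun i => xor (b i) (e i)) p.1 * trm τ t b p.2) = G p := by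
    intro p
    simp only [hG]
    rw [Finset.mul_sum]
    refine Finset.sum_congr rfl fun b _ => ?_
    have h1 : sg (fun i => xor (b i) (e i)) p.1 = sg b p.1 * sg e p.1 := (sg_mul_sg b e p.1).symm
    have h2 : sg b p.1 * sg b p.2 = sg b (p.1 + p.2) := (sg_add b p.1 p.2).symm
    calc trm τ t (fun i => xor (b i) (e i)) p.1 * trm τ t b p.2
        = (gph τ t p.1 * gph τ t p.2 * sg e p.1) * (sg b p.1 * sg b p.2) := by
          rw [trm_eq_gph_mul_sg, trm_eq_gph_mul_sg, h1]; ring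
      _ = gph τ t p.1 * gph τ t p.2 * sg e p.1 * sg b (p.1 + p.2) := by rw [h2]
  have step2 : ∑ b : Fin g → Bool, T τ t (fun i => xor (b i) (e i)) * T τ t b
      = ∑' p : (Fin g → ℤ) × (Fin g → ℤ), G p := by
    rw [Finset.sum_congr rfl fun b _ => step1 b]
    rw [← Summable.tsum_finsetSum (fun b _ => summable_mul_of_summable_norm (hn _) (hn _))]
    exact tsum_congr hpoint
  -- reindex via (u,v) ↦ (u+v, u-v)
  set φm : ((Fin g → ℤ) × (Fin g → ℤ)) → ((Fin g → ℤ) × (Fin g → ℤ)) :=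
    fun q => (q.1 + q.2, q.1 - q.2) with hφm
  have hinj : Function.Injective φm := by
    intro q q' h
    have h1 := congrArg Prod.fst h
    have h2 := congrArg Prod.snd h
    simp only [hφm] at h1 h2
    have e1 : q.1 = q'.1 := by
      funext i
      have a1 := congrFun h1 i
      have a2 := congrFun h2 i
      simp only [Pi.add_apply, Pi.sub_apply] at a1 a2
      omega
    have e2 : q.2 = q'.2 := by
      funext i
      have a1 := congrFun h1 i
      have a2 := congrFun h2 i
      simp only [Pi.add_apply, Pi.sub_apply] at a1 a2
      omega
    exact Prod.ext e1 e2
  have hsupp : Function.support G ⊆ Set.range φm := by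
    rw [Function.support_subset_iff']
    intro p hp
    have hodd : ¬ ∀ i, Even ((p.1 + p.2) i) := by
      intro hall
      apply hp
      refine ⟨(fun i => (p.1 i + p.2 i) / 2, fun i => (p.1 i - p.2 i) / 2), ?_⟩
      have hx : (fun i => (p.1 i + p.2 i) / 2) + (fun i => (p.1 i - p.2 i) / 2) = p.1 := by
        funext i
        have hi := hall i
        simp only [Pi.add_apply] at hi
        rw [Int.even_iff] at hi
        simp only [Pi.add_apply]
        omega
      have hy : (fun i => (p.1 i + p.2 i) / 2) - (fun i => (p.1 i - p.2 i) / 2) = p.2 := by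
        funext i
        have hi := hall i
        simp only [Pi.add_apply] at hi
        rw [Int.even_iff] at hi
        simp only [Pi.sub_apply]
        omega
      rw [hφm]
      exact Prod.ext hx hy
    simp only [hG]
    rw [sum_sg_eq_zero hodd, mul_zero]
  have hGφ : ∀ q : (Fin g → ℤ) × (Fin g → ℤ),
      G (φm q) = (2 : ℂ) ^ g * (trm τ (2 * t) e q.1 * trm τ (2 * t) e q.2) := by
    intro q
    rcases q with ⟨u, v⟩
    have harg : (u + v) + (u - v) = 2 * u := by
      funext i
      simp only [Pi.add_apply, Pi.sub_apply, Pi.mul_apply]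
      have : (2 : Fin g → ℤ) i = 2 := rfl
      rw [this]
      ring
    have hsg2 : (∑ b : Fin g → Bool, sg b ((u + v) + (u - v))) = (2 : ℂ) ^ g := by
      rw [harg]
      exact sum_sg_even u
    show gph τ t (u + v) * gph τ t (u - v) * sg e (u + v)
        * (∑ b : Fin g → Bool, sg b ((u + v) + (u - v)))
        = (2 : ℂ) ^ g * (trm τ (2 * t) e u * trm τ (2 * t) e v)
    rw [hsg2, gph_par, sg_add, trm_eq_gph_mul_sg, trm_eq_gph_mul_sg]
    ring
  have step3 : ∑' p : (Fin g → ℤ) × (Fin g → ℤ), G p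
      = ∑' q : (Fin g → ℤ) × (Fin g → ℤ), G (φm q) := (hinj.tsum_eq hsupp).symm
  have step4 : ∑' q : (Fin g → ℤ) × (Fin g → ℤ), G (φm q)
      = (2 : ℂ) ^ g * ∑' q : (Fin g → ℤ) × (Fin g → ℤ),
          trm τ (2 * t) e q.1 * trm τ (2 * t) e q.2 := by
    rw [tsum_congr hGφ]
    exact tsum_mul_left
  have step5 : ∑' q : (Fin g → ℤ) × (Fin g → ℤ), trm τ (2 * t) e q.1 * trm τ (2 * t) e q.2
      = T τ (2 * t) e * T τ (2 * t) e := (tsum_mul_tsum_of_summable_norm (hn2 _) (hn2 _)).symm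
  rw [step2, step3, step4, step5, sq]
  ring

end Main


section Final

variable {g : ℕ} (τ : Matrix (Fin g) (Fin g) ℂ) {lam : ℝ}

noncomputable def Aq (t : ℝ) : ℝ := ∑ e : Fin g → Bool, ‖T τ t e‖ ^ 2

lemma card_bool_fun : (Finset.univ : Finset (Fin g → Bool)).card = 2 ^ g := by
  simp [Finset.card_univ]

lemma sum_sq_reindex (t : ℝ) (e : Fin g → Bool) :
    ∑ b : Fin g → Bool, ‖T τ t (fun i => xor (b i) (e i))‖ ^ 2 = Aq τ t := by
  rw [Aq]
  have hbij : Function.Bijective (fun b : Fin g → Bool => (fun i => xor (b i) (e i))) := by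
    apply Function.Involutive.bijective
    intro b
    funext i
    cases hb : b i <;> cases he : e i <;> simp [hb, he]
  exact Fintype.sum_bijective _ hbij _ _ (fun b => rfl)

lemma absT_sq_le (hlam0 : 0 < lam)
    (hlam : ∀ n : Fin g → ℤ, lam * ∑ i, ((n i : ℝ)) ^ 2 ≤ qR τ n) {t : ℝ} (ht : 1 ≤ t)
    (e : Fin g → Bool) :
    ‖T τ (2 * t) e‖ ^ 2 * 2 ^ g ≤ Aq τ t := by
  have hk := key τ hlam0 hlam ht e
  have h2 : ‖T τ (2 * t) e ^ 2 * (2 : ℂ) ^ g‖ ≤ Aq τ t := by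
    rw [← hk]
    refine le_trans (norm_sum_le _ _) ?_
    have hb : ∀ b : Fin g → Bool,
        ‖T τ t (fun i => xor (b i) (e i)) * T τ t b‖
          ≤ (‖T τ t (fun i => xor (b i) (e i))‖ ^ 2
              + ‖T τ t b‖ ^ 2) / 2 := by
      intro b
      rw [norm_mul]
      nlinarith [sq_nonneg (‖T τ t (fun i => xor (b i) (e i))‖
          - ‖T τ t b‖),
        norm_nonneg (T τ t (fun i => xor (b i) (e i))),
        norm_nonneg (T τ t b)]
    refine le_trans (Finset.sum_le_sum fun b _ => hb b) ?_
    rw [← Finset.sum_div, Finset.sum_add_distrib, sum_sq_reindex]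
    rw [Aq]
    ring_nf
    exact le_refl _
  have habs : ‖T τ (2 * t) e ^ 2 * (2 : ℂ) ^ g‖
      = ‖T τ (2 * t) e‖ ^ 2 * 2 ^ g := by
    simp [norm_mul, norm_pow]
  rwa [habs] at h2

lemma Aq_doub (hlam0 : 0 < lam)
    (hlam : ∀ n : Fin g → ℤ, lam * ∑ i, ((n i : ℝ)) ^ 2 ≤ qR τ n) {t : ℝ} (ht : 1 ≤ t) :
    Aq τ (2 * t) ≤ Aq τ t := by
  have h2g : (0 : ℝ) < 2 ^ g := by positivity
  calc Aq τ (2 * t) = ∑ e : Fin g → Bool, ‖T τ (2 * t) e‖ ^ 2 := rfl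
    _ ≤ ∑ _e : Fin g → Bool, Aq τ t / 2 ^ g := by
        refine Finset.sum_le_sum fun e _ => ?_
        rw [le_div_iff₀ h2g]
        exact absT_sq_le τ hlam0 hlam ht e
    _ = Aq τ t := by
        rw [Finset.sum_const, card_bool_fun, nsmul_eq_mul]
        push_cast
        field_simp
lemma Aq_pow (hlam0 : 0 < lam)
    (hlam : ∀ n : Fin g → ℤ, lam * ∑ i, ((n i : ℝ)) ^ 2 ≤ qR τ n) (k : ℕ) :
    Aq τ ((2 : ℝ) ^ k) ≤ Aq τ 1 := by
  induction k with
  | zero => simp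
  | succ k ih =>
      have h1 : (1 : ℝ) ≤ (2 : ℝ) ^ k := one_le_pow₀ one_le_two
      calc Aq τ ((2 : ℝ) ^ (k + 1)) = Aq τ (2 * (2 : ℝ) ^ k) := by rw [pow_succ, mul_comm]
        _ ≤ Aq τ ((2 : ℝ) ^ k) := Aq_doub τ hlam0 hlam h1
        _ ≤ Aq τ 1 := ih

lemma summable_exp_qR (hlam0 : 0 < lam)
    (hlam : ∀ n : Fin g → ℤ, lam * ∑ i, ((n i : ℝ)) ^ 2 ≤ qR τ n) :
    Summable fun n : Fin g → ℤ => Real.exp (-Real.pi * qR τ n) := by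
  refine Summable.of_nonneg_of_le (fun n => (Real.exp_pos _).le) (fun n => ?_)
    (gaussSummable (c := Real.pi * lam) (by positivity) g)
  apply Real.exp_le_exp.mpr
  have h1 := hlam n
  have hpi := Real.pi_pos
  nlinarith

lemma T_lower (hlam0 : 0 < lam)
    (hlam : ∀ n : Fin g → ℤ, lam * ∑ i, ((n i : ℝ)) ^ 2 ≤ qR τ n) {t : ℝ} (ht : 1 ≤ t)
    (e : Fin g → Bool) :
    1 - (∑' n : Fin g → ℤ, Real.exp (-Real.pi * qR τ n))
        * Real.exp (-(Real.pi * lam) * (t - 1)) ≤ ‖T τ t e‖ := by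
  classical
  set Cc := ∑' n : Fin g → ℤ, Real.exp (-Real.pi * qR τ n) with hCc
  have hCsum := summable_exp_qR τ hlam0 hlam
  have h0 : trm τ t e 0 = 1 := by simp [trm, qC, lr]
  have hsplit := Summable.tsum_eq_add_tsum_ite (summable_trm τ hlam0 hlam ht e) 0
  set R := ∑' n : Fin g → ℤ, if n = 0 then (0 : ℂ) else trm τ t e n with hR
  have hTR : T τ t e = 1 + R := by
    rw [T, hsplit, h0]
  have hRsum : Summable fun n : Fin g → ℤ =>
      ‖if n = (0 : Fin g → ℤ) then (0 : ℂ) else trm τ t e n‖ := by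
    refine Summable.of_nonneg_of_le (fun n => norm_nonneg _) (fun n => ?_)
      (summable_abs_trm τ hlam0 hlam ht e)
    by_cases hn : n = 0 <;> simp [hn]
  have hb : ∀ n : Fin g → ℤ, ‖if n = (0 : Fin g → ℤ) then (0 : ℂ) else trm τ t e n‖
      ≤ Real.exp (-(Real.pi * lam) * (t - 1)) * Real.exp (-Real.pi * qR τ n) := by
    intro n
    by_cases hn : n = 0
    · subst hn
      rw [if_pos rfl, norm_zero]
      positivity
    · rw [if_neg hn, abs_trm, ← Real.exp_add]
      apply Real.exp_le_exp.mpr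
      have h1 : lam ≤ qR τ n := qR_ge_lam τ hlam0 hlam hn
      have hpi := Real.pi_pos
      nlinarith [mul_nonneg (mul_nonneg hpi.le (by linarith : (0:ℝ) ≤ t - 1))
        (by linarith : (0:ℝ) ≤ qR τ n - lam)]
  have hRle : ‖R‖ ≤ Real.exp (-(Real.pi * lam) * (t - 1)) * Cc := by
    refine le_trans (norm_tsum_le_tsum_norm hRsum) ?_
    refine le_trans (Summable.tsum_le_tsum hb hRsum (hCsum.mul_left _)) ?_
    rw [tsum_mul_left]
  have htri : (1 : ℝ) ≤ ‖T τ t e‖ + ‖R‖ := by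
    have h3 := norm_sub_le (1 + R) R
    have h4 : (1 + R) - R = (1 : ℂ) := by ring
    rw [h4, norm_one, ← hTR] at h3
    exact h3
  have : Cc * Real.exp (-(Real.pi * lam) * (t - 1))
      = Real.exp (-(Real.pi * lam) * (t - 1)) * Cc := mul_comm _ _
  rw [this]
  linarith

lemma exists_big_T (hg : 1 ≤ g) (hlam0 : 0 < lam)
    (hlam : ∀ n : Fin g → ℤ, lam * ∑ i, ((n i : ℝ)) ^ 2 ≤ qR τ n) :
    ∃ e : Fin g → Bool, 1 ≤ ‖T τ 1 e‖ := by
  classical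
  set Cc := ∑' n : Fin g → ℤ, Real.exp (-Real.pi * qR τ n) with hCc
  have hCc0 : 0 ≤ Cc := tsum_nonneg fun n => (Real.exp_pos _).le
  set ρ := Real.exp (-(Real.pi * lam)) with hρ
  have hρ0 : 0 ≤ ρ := (Real.exp_pos _).le
  have hρ1 : ρ < 1 := by
    rw [hρ]
    apply Real.exp_lt_one_iff.mpr
    have := Real.pi_pos
    nlinarith
  have hδ : ∀ k : ℕ, Real.exp (-(Real.pi * lam) * ((2 : ℝ) ^ k - 1)) ≤ ρ ^ k := by
    intro k
    have hk2 : (k : ℝ) + 1 ≤ (2 : ℝ) ^ k := by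
      have := Nat.lt_two_pow_self (n := k)
      have h2 : (k : ℕ) + 1 ≤ 2 ^ k := this
      exact_mod_cast h2
    have hρk : ρ ^ k = Real.exp (-(Real.pi * lam) * k) := by
      rw [hρ, ← Real.exp_nat_mul]
      ring_nf
    rw [hρk]
    apply Real.exp_le_exp.mpr
    have hpi := Real.pi_pos
    have h6 : (Real.pi * lam) * (k : ℝ) ≤ (Real.pi * lam) * ((2 : ℝ) ^ k - 1) :=
      mul_le_mul_of_nonneg_left (by linarith) (by positivity)
    linarith
  have hAk : ∀ k : ℕ, (2 : ℝ) ^ g * (1 - 2 * (Cc * ρ ^ k)) ≤ Aq τ 1 := by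
    intro k
    have h1k : (1 : ℝ) ≤ (2 : ℝ) ^ k := one_le_pow₀ one_le_two
    have hA1 := Aq_pow τ hlam0 hlam k
    have hper : ∀ e : Fin g → Bool,
        1 - 2 * (Cc * ρ ^ k) ≤ ‖T τ ((2 : ℝ) ^ k) e‖ ^ 2 := by
      intro e
      have hlow := T_lower τ hlam0 hlam h1k e
      have hmono : Cc * Real.exp (-(Real.pi * lam) * ((2 : ℝ) ^ k - 1)) ≤ Cc * ρ ^ k :=
        mul_le_mul_of_nonneg_left (hδ k) hCc0
      have ha0 := norm_nonneg (T τ ((2 : ℝ) ^ k) e)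
      nlinarith [sq_nonneg (‖T τ ((2 : ℝ) ^ k) e‖ - 1)]
    calc (2 : ℝ) ^ g * (1 - 2 * (Cc * ρ ^ k))
        = ∑ _e : Fin g → Bool, (1 - 2 * (Cc * ρ ^ k)) := by
          rw [Finset.sum_const, card_bool_fun, nsmul_eq_mul]
          push_cast
          ring
      _ ≤ ∑ e : Fin g → Bool, ‖T τ ((2 : ℝ) ^ k) e‖ ^ 2 :=
          Finset.sum_le_sum fun e _ => hper e
      _ = Aq τ ((2 : ℝ) ^ k) := rfl
      _ ≤ Aq τ 1 := hA1
  have hlim : Filter.Tendsto (fun k : ℕ => (2 : ℝ) ^ g * (1 - 2 * (Cc * ρ ^ k)))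
      Filter.atTop (nhds ((2 : ℝ) ^ g * (1 - 2 * (Cc * 0)))) := by
    apply Filter.Tendsto.const_mul
    apply Filter.Tendsto.const_sub
    apply Filter.Tendsto.const_mul
    apply Filter.Tendsto.const_mul
    exact tendsto_pow_atTop_nhds_zero_of_lt_one hρ0 hρ1
  have h2g : (2 : ℝ) ^ g ≤ Aq τ 1 := by
    have h := le_of_tendsto' hlim hAk
    simpa using h
  by_contra hcon
  push_neg at hcon
  have hlt : Aq τ 1 < (2 : ℝ) ^ g := by
    have : ∀ e : Fin g → Bool, ‖T τ 1 e‖ ^ 2 < 1 := by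
      intro e
      have h1 := hcon e
      have h2 := norm_nonneg (T τ 1 e)
      nlinarith
    calc Aq τ 1 < ∑ _e : Fin g → Bool, (1 : ℝ) :=
          Finset.sum_lt_sum_of_nonempty Finset.univ_nonempty fun e _ => this e
      _ = (2 : ℝ) ^ g := by
          rw [Finset.sum_const, card_bool_fun, nsmul_eq_mul]
          push_cast
          ring
  linarith

end Final


section Bridge

variable {g : ℕ}

lemma theta_eq (τ : Matrix (Fin g) (Fin g) ℂ) (e : Fin g → Bool) :
    thetaChar (halfChar (fun _ => false)) (halfChar e) τ 0 = T τ 1 e := by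
  rw [thetaChar, T]
  refine tsum_congr fun n => ?_
  rw [trm]
  congr 1
  have hhf : ∀ i : Fin g, ((halfChar (fun _ : Fin g => false) i : ℝ) : ℂ) = 0 := by
    intro i
    simp [halfChar]
  simp only [hhf, add_zero, Pi.zero_apply, zero_add, qC, lr, halfChar]
  push_cast
  ring

end Bridge

end ThetaAux

/-- For every `τ` in the Siegel upper half space,
`max_{(m₁,m₂)∈{0,1/2}^{2g}} |θ_{(m₁,m₂)}(τ,0)| ≥ 1`. -/
theorem thetaNullwerte_max_ge_one (g : ℕ) (hg : 1 ≤ g)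
    (τ : Matrix (Fin g) (Fin g) ℂ) (hsym : τ.IsSymm)
    (hpos : (Matrix.of fun i j => (τ i j).im).PosDef) :
    1 ≤ Finset.univ.sup' Finset.univ_nonempty
        fun p : (Fin g → Bool) × (Fin g → Bool) =>
          ‖thetaChar (halfChar p.1) (halfChar p.2) τ 0‖ := by
  obtain ⟨lam, hlam0, hlam⟩ := ThetaAux.exists_lam hg τ hpos
  obtain ⟨e, he⟩ := ThetaAux.exists_big_T τ hg hlam0 hlam
  have h1 : 1 ≤ ‖thetaChar (halfChar (fun _ => false)) (halfChar e) τ 0‖ := by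
    rw [ThetaAux.theta_eq τ e]
    exact he
  exact le_trans h1 (Finset.le_sup'
    (f := fun p : (Fin g → Bool) × (Fin g → Bool) =>
      ‖thetaChar (halfChar p.1) (halfChar p.2) τ 0‖)
    (Finset.mem_univ ((fun _ => false), e)))
end

section
/- Let r ≥ 2 be an even integer, τ ∈ 𝔖_g with Y = Im(τ), and let (m₁,m₂) and (m₁′,m₂′) be two distinct pairs of characteristics with m₁, m₂, m₁′, m₂′ ∈ {0, 1/r, …, (r−1)/r}^g. Then the functions z ↦ θ_{(m₁,m₂)}(τ, rz) and z ↦ θ_{(m₁′,m₂′)}(τ, rz) are orthogonal in L² for the hermitian metric of level r²: the integral over (a,b) ∈ [0,1)^{2g} of θ_{(m₁,m₂)}(τ, r(a+τb)) · conj(θ_{(m₁′,m₂′)}(τ, r(a+τb))) · exp(−2π r² bᵀY b) (with respect to Lebesgue measure da db) equals 0. -/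
/-- The imaginary part `Y = Im τ` of a complex matrix. -/
noncomputable def imMat {g : ℕ} (τ : Matrix (Fin g) (Fin g) ℂ) :
    Matrix (Fin g) (Fin g) ℝ :=
  Matrix.of fun i j => (τ i j).im

/-- The point `a + τ b ∈ ℂ^g` attached to real parameters `(a,b) ∈ ℝ^g × ℝ^g`. -/
noncomputable def torusPoint {g : ℕ} (τ : Matrix (Fin g) (Fin g) ℂ)
    (a b : Fin g → ℝ) : Fin g → ℂ :=
  fun i => (a i : ℂ) + ∑ j, τ i j * (b j : ℂ)

open Complex Finset MeasureTheory Pointwise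

section ThetaShift

variable {g : ℕ} (m₁ m₂ : Fin g → ℝ) (τ : Matrix (Fin g) (Fin g) ℂ)

lemma thetaChar_add_int (z w : Fin g → ℂ) (k : Fin g → ℤ)
    (hw : ∀ i, w i = z i + (k i : ℂ)) :
    thetaChar m₁ m₂ τ w =
      Complex.exp (2 * (Real.pi : ℂ) * Complex.I * ∑ i, (m₁ i : ℂ) * (k i : ℂ)) *
        thetaChar m₁ m₂ τ z := by
  have hw' : w = fun i => z i + (k i : ℂ) := funext hw
  subst hw'
  unfold thetaChar
  rw [← tsum_mul_left]
  refine tsum_congr fun n => ?_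
  rw [← Complex.exp_add]
  have h1 : Complex.exp ((↑(∑ i, n i * k i) : ℂ) * (2 * (Real.pi : ℂ) * Complex.I)) = 1 := by
    exact_mod_cast Complex.exp_int_mul_two_pi_mul_I (∑ i, n i * k i)
  have hsum : ∑ i, ((n i : ℂ) + (m₁ i : ℂ)) * (z i + (k i : ℂ) + (m₂ i : ℂ)) =
      ∑ i, ((n i : ℂ) + (m₁ i : ℂ)) * (z i + (m₂ i : ℂ))
        + ∑ i, ((m₁ i : ℂ)) * (k i : ℂ) + ∑ i, ((n i : ℂ)) * (k i : ℂ) := by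
    rw [← Finset.sum_add_distrib, ← Finset.sum_add_distrib]
    exact Finset.sum_congr rfl fun i _ => by ring
  have key : (Real.pi : ℂ) * Complex.I *
        (∑ i, ∑ j, ((n i : ℂ) + (m₁ i : ℂ)) * τ i j * ((n j : ℂ) + (m₁ j : ℂ)))
      + 2 * (Real.pi : ℂ) * Complex.I * (∑ i, ((n i : ℂ) + (m₁ i : ℂ)) * ((z i + (k i : ℂ)) + (m₂ i : ℂ)))
      = (2 * (Real.pi : ℂ) * Complex.I * ∑ i, (m₁ i : ℂ) * (k i : ℂ)
        + ((Real.pi : ℂ) * Complex.I *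
            (∑ i, ∑ j, ((n i : ℂ) + (m₁ i : ℂ)) * τ i j * ((n j : ℂ) + (m₁ j : ℂ)))
          + 2 * (Real.pi : ℂ) * Complex.I * (∑ i, ((n i : ℂ) + (m₁ i : ℂ)) * (z i + (m₂ i : ℂ)))))
        + (↑(∑ i, n i * k i) : ℂ) * (2 * (Real.pi : ℂ) * Complex.I) := by
    push_cast
    linear_combination (2 * (Real.pi : ℂ) * Complex.I) * hsum
  rw [key, Complex.exp_add, h1, mul_one]

lemma quad_shift (hsym : τ.IsSymm) (N K W : Fin g → ℂ) :
    (Real.pi : ℂ) * Complex.I * ∑ i, ∑ j, (N i - K i) * τ i j * (N j - K j)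
      + 2 * (Real.pi : ℂ) * Complex.I * ∑ i, (N i - K i) * (W i + ∑ l, τ i l * K l)
    = (-((Real.pi : ℂ) * Complex.I) * ∑ i, ∑ j, K i * τ i j * K j
        - 2 * (Real.pi : ℂ) * Complex.I * ∑ i, K i * W i)
      + ((Real.pi : ℂ) * Complex.I * ∑ i, ∑ j, N i * τ i j * N j
        + 2 * (Real.pi : ℂ) * Complex.I * ∑ i, N i * W i) := by
  have e3 : ∑ i, ∑ j, K i * τ i j * N j = ∑ i, ∑ j, N i * τ i j * K j := by
    rw [Finset.sum_comm]
    refine Finset.sum_congr rfl fun i _ => Finset.sum_congr rfl fun j _ => ?_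
    rw [hsym.apply i j]; ring
  have eQ : ∑ i, ∑ j, (N i - K i) * τ i j * (N j - K j)
      = ∑ i, ∑ j, N i * τ i j * N j - ∑ i, ∑ j, N i * τ i j * K j
        - ∑ i, ∑ j, K i * τ i j * N j + ∑ i, ∑ j, K i * τ i j * K j := by
    simp only [← Finset.sum_sub_distrib, ← Finset.sum_add_distrib]
    exact Finset.sum_congr rfl fun i _ => Finset.sum_congr rfl fun j _ => by ring
  have eL : ∑ i, (N i - K i) * (W i + ∑ l, τ i l * K l)
      = ∑ i, N i * W i - ∑ i, K i * W i
        + ∑ i, ∑ j, N i * τ i j * K j - ∑ i, ∑ j, K i * τ i j * K j := by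
    simp only [← Finset.sum_sub_distrib, ← Finset.sum_add_distrib]
    refine Finset.sum_congr rfl fun i _ => ?_
    rw [sub_mul, mul_add, mul_add, Finset.mul_sum, Finset.mul_sum]
    simp only [← mul_assoc]
    ring
  linear_combination ((Real.pi : ℂ) * Complex.I) * eQ
    + (2 * (Real.pi : ℂ) * Complex.I) * eL - ((Real.pi : ℂ) * Complex.I) * e3

lemma thetaChar_add_tau (hsym : τ.IsSymm) (z w : Fin g → ℂ) (k : Fin g → ℤ)
    (hw : ∀ i, w i = z i + ∑ l, τ i l * (k l : ℂ)) :
    thetaChar m₁ m₂ τ w =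
      Complex.exp (-((Real.pi : ℂ) * Complex.I) * ∑ i, ∑ j, (k i : ℂ) * τ i j * (k j : ℂ)
          - 2 * (Real.pi : ℂ) * Complex.I * ∑ i, (k i : ℂ) * (z i + (m₂ i : ℂ)))
        * thetaChar m₁ m₂ τ z := by
  have hw' : w = fun i => z i + ∑ l, τ i l * (k l : ℂ) := funext hw
  subst hw'
  unfold thetaChar
  rw [← tsum_mul_left]
  rw [← (Equiv.subRight k).tsum_eq (fun n : Fin g → ℤ =>
    Complex.exp (Real.pi * Complex.I *
        (∑ i, ∑ j, ((n i : ℂ) + (m₁ i : ℂ)) * τ i j * ((n j : ℂ) + (m₁ j : ℂ)))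
      + 2 * Real.pi * Complex.I *
        (∑ i, ((n i : ℂ) + (m₁ i : ℂ)) * ((z i + ∑ l, τ i l * (k l : ℂ)) + (m₂ i : ℂ)))))]
  refine tsum_congr fun n => ?_
  simp only [Equiv.subRight_apply, Pi.sub_apply, Int.cast_sub]
  rw [← Complex.exp_add]
  congr 1
  have c1 : ∑ i, ∑ j, ((n i : ℂ) - (k i : ℂ) + (m₁ i : ℂ)) * τ i j * ((n j : ℂ) - (k j : ℂ) + (m₁ j : ℂ))
      = ∑ i, ∑ j, (((n i : ℂ) + (m₁ i : ℂ)) - (k i : ℂ)) * τ i j * (((n j : ℂ) + (m₁ j : ℂ)) - (k j : ℂ)) :=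
    Finset.sum_congr rfl fun i _ => Finset.sum_congr rfl fun j _ => by ring
  have c2 : ∑ i, ((n i : ℂ) - (k i : ℂ) + (m₁ i : ℂ)) * ((z i + ∑ l, τ i l * (k l : ℂ)) + (m₂ i : ℂ))
      = ∑ i, (((n i : ℂ) + (m₁ i : ℂ)) - (k i : ℂ)) * ((z i + (m₂ i : ℂ)) + ∑ l, τ i l * (k l : ℂ)) :=
    Finset.sum_congr rfl fun i _ => by ring
  rw [c1, c2]
  have := quad_shift τ hsym (fun i => (n i : ℂ) + (m₁ i : ℂ)) (fun i => (k i : ℂ))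
    (fun i => z i + (m₂ i : ℂ))
  linear_combination this

end ThetaShift

lemma integral_box_translate {g : ℕ} (f : ((Fin g → ℝ) × (Fin g → ℝ)) → ℂ)
    (hf1 : ∀ (j : Fin g) (p : (Fin g → ℝ) × (Fin g → ℝ)),
      f (p + (Pi.single j (1:ℝ), 0)) = f p)
    (hf2 : ∀ (j : Fin g) (p : (Fin g → ℝ) × (Fin g → ℝ)),
      f (p + (0, Pi.single j (1:ℝ))) = f p)
    (v : (Fin g → ℝ) × (Fin g → ℝ)) :
    ∫ p in (Set.univ.pi fun _ : Fin g => Set.Ico (0:ℝ) 1) ×ˢ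
        (Set.univ.pi fun _ : Fin g => Set.Ico (0:ℝ) 1), f (p + v)
      = ∫ p in (Set.univ.pi fun _ : Fin g => Set.Ico (0:ℝ) 1) ×ˢ
        (Set.univ.pi fun _ : Fin g => Set.Ico (0:ℝ) 1), f p := by
  classical
  set D : Set ((Fin g → ℝ) × (Fin g → ℝ)) :=
    (Set.univ.pi fun _ : Fin g => Set.Ico (0:ℝ) 1) ×ˢ
      (Set.univ.pi fun _ : Fin g => Set.Ico (0:ℝ) 1) with hDdef
  set B : Module.Basis (Fin g ⊕ Fin g) ℝ ((Fin g → ℝ) × (Fin g → ℝ)) :=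
    (Pi.basisFun ℝ (Fin g)).prod (Pi.basisFun ℝ (Fin g)) with hB
  have hD : ZSpan.fundamentalDomain B = D := by
    ext p
    rw [ZSpan.mem_fundamentalDomain]
    constructor
    · intro h
      refine ⟨fun i _ => ?_, fun i _ => ?_⟩
      · simpa [hB] using h (Sum.inl i)
      · simpa [hB] using h (Sum.inr i)
    · rintro ⟨h1, h2⟩ i
      rcases i with i | i
      · simpa [hB] using h1 i (Set.mem_univ i)
      · simpa [hB] using h2 i (Set.mem_univ i)
  haveI : Countable ((Submodule.span ℤ (Set.range ⇑B)).toAddSubgroup) :=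
    inferInstanceAs (Countable (Submodule.span ℤ (Set.range ⇑B)))
  haveI : (volume : Measure ((Fin g → ℝ) × (Fin g → ℝ))).IsAddRightInvariant :=
    inferInstanceAs (((volume : Measure (Fin g → ℝ)).prod volume).IsAddRightInvariant)
  haveI : (volume : Measure ((Fin g → ℝ) × (Fin g → ℝ))).IsAddLeftInvariant :=
    inferInstanceAs (((volume : Measure (Fin g → ℝ)).prod volume).IsAddLeftInvariant)
  have hfund : IsAddFundamentalDomain (Submodule.span ℤ (Set.range ⇑B)).toAddSubgroup D volume :=
    hD ▸ ZSpan.isAddFundamentalDomain' B volume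
  have hfund2 : IsAddFundamentalDomain (Submodule.span ℤ (Set.range ⇑B)).toAddSubgroup
      (v +ᵥ D) volume := hfund.vadd_of_comm v
  have hinv : ∀ (γ : (Submodule.span ℤ (Set.range ⇑B)).toAddSubgroup)
      (x : (Fin g → ℝ) × (Fin g → ℝ)), f (γ +ᵥ x) = f x := by
    set S : AddSubgroup ((Fin g → ℝ) × (Fin g → ℝ)) :=
      { carrier := {w | ∀ x, f (x + w) = f x}
        zero_mem' := fun x => by simp
        add_mem' := fun {a b} ha hb x => by
          rw [← add_assoc, hb (x + a), ha x]
        neg_mem' := fun {a} ha x => by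
          have := ha (x + -a)
          rw [add_assoc, neg_add_cancel, add_zero] at this
          exact this.symm } with hS
    have hle : Submodule.span ℤ (Set.range ⇑B) ≤ AddSubgroup.toIntSubmodule S := by
      rw [Submodule.span_le]
      rintro _ ⟨i, rfl⟩
      rcases i with i | i
      · intro x
        have h0 : B (Sum.inl i) = ((Pi.single i 1 : Fin g → ℝ), 0) := by
          ext <;> simp [hB, Module.Basis.prod_apply]
        rw [h0]
        exact hf1 i x
      · intro x
        have h0 : B (Sum.inr i) = (0, (Pi.single i 1 : Fin g → ℝ)) := by
          ext <;> simp [hB, Module.Basis.prod_apply]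
        rw [h0]
        exact hf2 i x
    intro γ x
    have hγ : (γ : (Fin g → ℝ) × (Fin g → ℝ)) ∈ S := hle γ.2
    have := hγ x
    show f ((γ : (Fin g → ℝ) × (Fin g → ℝ)) + x) = f x
    rwa [add_comm]
  calc ∫ p in D, f (p + v) ∂volume
      = ∫ p in (fun p => p + v) '' D, f p ∂volume := by
        rw [(measurePreserving_add_right volume v).setIntegral_image_emb
          (MeasurableEquiv.addRight v).measurableEmbedding f D]
    _ = ∫ p in v +ᵥ D, f p ∂volume := by
        rw [show (fun p => p + v) '' D = v +ᵥ D from by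
          rw [← Set.image_vadd]; exact Set.image_congr fun d _ => add_comm d v]
    _ = ∫ p in D, f p ∂volume := hfund2.setIntegral_eq hfund hinv

noncomputable def integrandF (g r : ℕ) (τ : Matrix (Fin g) (Fin g) ℂ)
    (m₁ m₂ m₁' m₂' : Fin g → ℝ) (p : (Fin g → ℝ) × (Fin g → ℝ)) : ℂ :=
  thetaChar m₁ m₂ τ (fun i => (r : ℂ) * torusPoint τ p.1 p.2 i)
    * (starRingEnd ℂ)
        (thetaChar m₁' m₂' τ (fun i => (r : ℂ) * torusPoint τ p.1 p.2 i))
    * (Real.exp (-2 * Real.pi * (r : ℝ)^2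
        * ∑ i, ∑ j, p.2 i * imMat τ i j * p.2 j) : ℂ)

lemma integrandF_shift_a (g r : ℕ) (τ : Matrix (Fin g) (Fin g) ℂ)
    (m₁ m₂ m₁' m₂' : Fin g → ℝ) (j : Fin g) (K : ℤ) (c : ℝ) (hc : (K : ℝ) = r * c)
    (a b : Fin g → ℝ) :
    integrandF g r τ m₁ m₂ m₁' m₂' (a + Pi.single j c, b)
      = Complex.exp (2 * (Real.pi : ℂ) * Complex.I *
          ((K : ℂ) * ((m₁ j : ℂ) - (m₁' j : ℂ))))
        * integrandF g r τ m₁ m₂ m₁' m₂' (a, b) := by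
  classical
  have hcC : (K : ℂ) = (r : ℂ) * (c : ℂ) := by exact_mod_cast hc
  have hZ : ∀ i, (r : ℂ) * torusPoint τ (a + Pi.single j c) b i
      = (r : ℂ) * torusPoint τ a b i + ((Pi.single j K : Fin g → ℤ) i : ℂ) := by
    intro i
    simp only [torusPoint, Pi.add_apply]
    by_cases h : i = j
    · subst h
      simp only [Pi.single_eq_same]
      push_cast
      linear_combination -hcC
    · simp [Pi.single_eq_of_ne h]
  unfold integrandF
  dsimp only
  rw [thetaChar_add_int m₁ m₂ τ (fun i => (r : ℂ) * torusPoint τ a b i) _ (Pi.single j K) hZ,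
    thetaChar_add_int m₁' m₂' τ (fun i => (r : ℂ) * torusPoint τ a b i) _ (Pi.single j K) hZ]
  rw [map_mul, ← Complex.exp_conj]
  have hE : Complex.exp (2 * (Real.pi : ℂ) * Complex.I *
        ∑ i, (m₁ i : ℂ) * ((Pi.single j K : Fin g → ℤ) i : ℂ))
      * Complex.exp ((starRingEnd ℂ) (2 * (Real.pi : ℂ) * Complex.I *
        ∑ i, (m₁' i : ℂ) * ((Pi.single j K : Fin g → ℤ) i : ℂ)))
      = Complex.exp (2 * (Real.pi : ℂ) * Complex.I * ((K : ℂ) * ((m₁ j : ℂ) - (m₁' j : ℂ)))) := by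
    rw [← Complex.exp_add]
    congr 1
    have hs : ∀ m : Fin g → ℝ, ∑ i, (m i : ℂ) * ((Pi.single j K : Fin g → ℤ) i : ℂ)
        = (m j : ℂ) * (K : ℂ) := by
      intro m
      rw [Finset.sum_eq_single j]
      · simp
      · intro b _ hb; simp [Pi.single_eq_of_ne hb]
      · intro h; exact absurd (Finset.mem_univ j) h
    rw [hs m₁, hs m₁']
    simp only [map_mul, map_ofNat, Complex.conj_I, Complex.conj_ofReal, map_intCast]
    ring
  linear_combination ((starRingEnd ℂ) (thetaChar m₁' m₂' τ (fun i => (r : ℂ) * torusPoint τ a b i))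
      * thetaChar m₁ m₂ τ (fun i => (r : ℂ) * torusPoint τ a b i)
      * (Real.exp (-2 * Real.pi * (r : ℝ)^2 * ∑ i, ∑ l, b i * imMat τ i l * b l) : ℂ)) * hE
section ShiftB

variable {g r : ℕ} {τ : Matrix (Fin g) (Fin g) ℂ}

lemma quad_expand (Y : Matrix (Fin g) (Fin g) ℝ) (hY : ∀ i l, Y i l = Y l i)
    (b d : Fin g → ℝ) :
    ∑ i, ∑ l, (b i + d i) * Y i l * (b l + d l)
      = ∑ i, ∑ l, b i * Y i l * b l + 2 * ∑ i, ∑ l, d i * Y i l * b l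
        + ∑ i, ∑ l, d i * Y i l * d l := by
  have e3 : ∑ i, ∑ l, b i * Y i l * d l = ∑ i, ∑ l, d i * Y i l * b l := by
    rw [Finset.sum_comm]
    refine Finset.sum_congr rfl fun i _ => Finset.sum_congr rfl fun l _ => ?_
    rw [hY l i]; ring
  have eQ : ∑ i, ∑ l, (b i + d i) * Y i l * (b l + d l)
      = ∑ i, ∑ l, b i * Y i l * b l + ∑ i, ∑ l, b i * Y i l * d l
        + ∑ i, ∑ l, d i * Y i l * b l + ∑ i, ∑ l, d i * Y i l * d l := by
    simp only [← Finset.sum_add_distrib]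
    exact Finset.sum_congr rfl fun i _ => Finset.sum_congr rfl fun l _ => by ring
  linear_combination eQ + e3

lemma integrandF_shift_b (hsym : τ.IsSymm) (m₁ m₂ m₁' m₂' : Fin g → ℝ)
    (j : Fin g) (K : ℤ) (c : ℝ) (hc : (K : ℝ) = r * c) (a b : Fin g → ℝ) :
    integrandF g r τ m₁ m₂ m₁' m₂' (a, b + Pi.single j c)
      = Complex.exp (2 * (Real.pi : ℂ) * Complex.I *
          ((K : ℂ) * ((m₂' j : ℂ) - (m₂ j : ℂ))))
        * integrandF g r τ m₁ m₂ m₁' m₂' (a, b) := by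
  classical
  have hcC : (K : ℂ) = (r : ℂ) * (c : ℂ) := by exact_mod_cast hc
  have hYsym : ∀ i l, imMat τ i l = imMat τ l i := by
    intro i l
    simp only [imMat, Matrix.of_apply]
    rw [hsym.apply l i]
  -- shift of the torus point
  have hZ : ∀ i, (r : ℂ) * torusPoint τ a (b + Pi.single j c) i
      = (r : ℂ) * torusPoint τ a b i + ∑ l, τ i l * ((Pi.single j K : Fin g → ℤ) l : ℂ) := by
    intro i
    simp only [torusPoint]
    have h1 : ∑ l, τ i l * (((b + Pi.single j c : Fin g → ℝ) l : ℝ) : ℂ)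
        = ∑ l, τ i l * ((b l : ℝ) : ℂ) + τ i j * (c : ℂ) := by
      have : ∀ l, τ i l * (((b + Pi.single j c : Fin g → ℝ) l : ℝ) : ℂ)
          = τ i l * ((b l : ℝ) : ℂ) + (if l = j then τ i l * (c : ℂ) else 0) := by
        intro l
        by_cases h : l = j
        · subst h; simp only [Pi.add_apply, Pi.single_eq_same, if_pos rfl]; push_cast; ring
        · rw [if_neg h]; simp [Pi.single_eq_of_ne h]
      rw [Finset.sum_congr rfl fun l _ => this l, Finset.sum_add_distrib,
        Finset.sum_ite_eq' Finset.univ j fun l => τ i l * (c : ℂ)]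
      simp
    have h2 : ∑ l, τ i l * ((Pi.single j K : Fin g → ℤ) l : ℂ) = τ i j * (K : ℂ) := by
      rw [Finset.sum_eq_single j]
      · simp
      · intro l _ hl; simp [Pi.single_eq_of_ne hl]
      · intro h; exact absurd (Finset.mem_univ j) h
    rw [h1, h2]
    linear_combination -(τ i j) * hcC
  unfold integrandF
  dsimp only
  rw [thetaChar_add_tau m₁ m₂ τ hsym (fun i => (r : ℂ) * torusPoint τ a b i) _ (Pi.single j K) hZ,
    thetaChar_add_tau m₁' m₂' τ hsym (fun i => (r : ℂ) * torusPoint τ a b i) _ (Pi.single j K) hZ]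
  rw [map_mul, ← Complex.exp_conj]
  -- collapse the singleton sums
  have hq : ∑ i, ∑ l, ((Pi.single j K : Fin g → ℤ) i : ℂ) * τ i l * ((Pi.single j K : Fin g → ℤ) l : ℂ)
      = (K : ℂ) * τ j j * (K : ℂ) := by
    rw [Finset.sum_eq_single j]
    · rw [Finset.sum_eq_single j]
      · simp
      · intro l _ hl; simp [Pi.single_eq_of_ne hl]
      · intro h; exact absurd (Finset.mem_univ j) h
    · intro i _ hi; simp [Pi.single_eq_of_ne hi]
    · intro h; exact absurd (Finset.mem_univ j) h
  have hl : ∀ m : Fin g → ℝ, ∑ i, ((Pi.single j K : Fin g → ℤ) i : ℂ)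
        * ((r : ℂ) * torusPoint τ a b i + (m i : ℂ))
      = (K : ℂ) * ((r : ℂ) * torusPoint τ a b j + (m j : ℂ)) := by
    intro m
    rw [Finset.sum_eq_single j]
    · simp
    · intro i _ hi; simp [Pi.single_eq_of_ne hi]
    · intro h; exact absurd (Finset.mem_univ j) h
  rw [hq, hl m₂, hl m₂']
  -- the weight factor
  have hd1 : ∑ i, ∑ l, (Pi.single j c : Fin g → ℝ) i * imMat τ i l * b l
      = c * ∑ l, imMat τ j l * b l := by
    rw [Finset.sum_eq_single j]
    · rw [Finset.mul_sum]
      exact Finset.sum_congr rfl fun l _ => by rw [Pi.single_eq_same]; ring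
    · intro i _ hi
      refine Finset.sum_eq_zero fun l _ => by simp [Pi.single_eq_of_ne hi]
    · intro h; exact absurd (Finset.mem_univ j) h
  have hd2 : ∑ i, ∑ l, (Pi.single j c : Fin g → ℝ) i * imMat τ i l * (Pi.single j c : Fin g → ℝ) l
      = c ^ 2 * imMat τ j j := by
    rw [Finset.sum_eq_single j]
    · rw [Finset.sum_eq_single j]
      · rw [Pi.single_eq_same]; ring
      · intro l _ hl; simp [Pi.single_eq_of_ne hl]
      · intro h; exact absurd (Finset.mem_univ j) h
    · intro i _ hi
      refine Finset.sum_eq_zero fun l _ => by simp [Pi.single_eq_of_ne hi]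
    · intro h; exact absurd (Finset.mem_univ j) h
  have hW : -2 * Real.pi * (r : ℝ)^2
        * ∑ i, ∑ l, (b + Pi.single j c : Fin g → ℝ) i * imMat τ i l * (b + Pi.single j c : Fin g → ℝ) l
      = -2 * Real.pi * (r : ℝ)^2 * ∑ i, ∑ l, b i * imMat τ i l * b l
        + (-2 * Real.pi * (r : ℝ)^2
            * (2 * (c * ∑ l, imMat τ j l * b l) + c ^ 2 * imMat τ j j)) := by
    have := quad_expand (imMat τ) hYsym b (Pi.single j c)
    simp only [Pi.add_apply] at this ⊢
    rw [this, hd1, hd2]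
    ring
  rw [hW, Real.exp_add, Complex.ofReal_mul, Complex.ofReal_exp
    (-2 * Real.pi * (r : ℝ)^2 * (2 * (c * ∑ l, imMat τ j l * b l) + c ^ 2 * imMat τ j j))]
  -- combine the exponentials
  simp only [torusPoint, imMat, Matrix.of_apply]
  have hτc : τ j j - (starRingEnd ℂ) (τ j j) = 2 * ((τ j j).im : ℂ) * Complex.I := by
    rw [Complex.sub_conj]; push_cast; ring
  have hSc : (∑ l, τ j l * ((b l : ℝ) : ℂ)) - ∑ l, (starRingEnd ℂ) (τ j l) * ((b l : ℝ) : ℂ)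
      = 2 * Complex.I * ∑ l, ((τ j l).im : ℂ) * ((b l : ℝ) : ℂ) := by
    rw [← Finset.sum_sub_distrib, Finset.mul_sum]
    refine Finset.sum_congr rfl fun l _ => ?_
    rw [← sub_mul, Complex.sub_conj]; push_cast; ring
  have hE : Complex.exp (-((Real.pi : ℂ) * Complex.I) * ((K : ℂ) * τ j j * (K : ℂ))
        - 2 * (Real.pi : ℂ) * Complex.I * ((K : ℂ)
          * ((r : ℂ) * ((a j : ℝ) + ∑ l, τ j l * ((b l : ℝ) : ℂ)) + ((m₂ j : ℝ) : ℂ))))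
      * Complex.exp ((starRingEnd ℂ) (-((Real.pi : ℂ) * Complex.I) * ((K : ℂ) * τ j j * (K : ℂ))
        - 2 * (Real.pi : ℂ) * Complex.I * ((K : ℂ)
          * ((r : ℂ) * ((a j : ℝ) + ∑ l, τ j l * ((b l : ℝ) : ℂ)) + ((m₂' j : ℝ) : ℂ)))))
      * Complex.exp ((-2 * Real.pi * (r : ℝ)^2
          * (2 * (c * ∑ l, (τ j l).im * b l) + c ^ 2 * (τ j j).im) : ℝ) : ℂ)
      = Complex.exp (2 * (Real.pi : ℂ) * Complex.I *
          ((K : ℂ) * ((m₂' j : ℂ) - (m₂ j : ℂ)))) := by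
    rw [← Complex.exp_add, ← Complex.exp_add]
    congr 1
    simp only [map_sub, map_neg, map_mul, map_add, map_ofNat, Complex.conj_I,
      Complex.conj_ofReal, map_intCast, map_natCast, map_sum]
    push_cast
    linear_combination (-(Real.pi : ℂ) * Complex.I * (K : ℂ)^2) * hτc
      - (2 * (Real.pi : ℂ) * Complex.I * (K : ℂ) * (r : ℂ)) * hSc
      + (2 * (Real.pi : ℂ) * ((τ j j).im : ℂ) * ((K : ℂ) + (r : ℂ) * (c : ℂ))
        + 4 * (Real.pi : ℂ) * (r : ℂ) * ∑ l, ((τ j l).im : ℂ) * ((b l : ℝ) : ℂ)) * hcC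
      + (-(4 * (Real.pi : ℂ) * (K : ℂ) * (r : ℂ) * ∑ l, ((τ j l).im : ℂ) * ((b l : ℝ) : ℂ))
        - 2 * (Real.pi : ℂ) * (K : ℂ)^2 * ((τ j j).im : ℂ)) * Complex.I_sq
  linear_combination (thetaChar m₁ m₂ τ (fun i => (r : ℂ) * ((a i : ℝ) + ∑ l, τ i l * ((b l : ℝ) : ℂ)))
      * (starRingEnd ℂ) (thetaChar m₁' m₂' τ (fun i => (r : ℂ) * ((a i : ℝ) + ∑ l, τ i l * ((b l : ℝ) : ℂ))))
      * ((Real.exp (-2 * Real.pi * (r : ℝ)^2 * ∑ i, ∑ l, b i * (τ i l).im * b l) : ℝ) : ℂ)) * hE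

end ShiftB

/-- Orthogonality of the theta functions with level `r` characteristics:
for two distinct pairs of characteristics `(m₁,m₂) ≠ (m₁′,m₂′)` in
`{0, 1/r, …, (r−1)/r}^g`, the functions `z ↦ θ_{(m₁,m₂)}(τ, rz)` and
`z ↦ θ_{(m₁′,m₂′)}(τ, rz)` are orthogonal in `L²` for the hermitian metric of
level `r²` on the torus `ℂ^g/(ℤ^g + τℤ^g)`. -/
theorem thetaChar_orthogonal (g r : ℕ) (hg : 1 ≤ g) (hr : 2 ≤ r) (hre : Even r)
    (τ : Matrix (Fin g) (Fin g) ℂ) (hsym : τ.IsSymm)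
    (hpos : (imMat τ).PosDef)
    (m₁ m₂ m₁' m₂' : Fin g → ℝ)
    (hm₁ : ∀ i, ∃ k : ℕ, k < r ∧ m₁ i = (k : ℝ) / r)
    (hm₂ : ∀ i, ∃ k : ℕ, k < r ∧ m₂ i = (k : ℝ) / r)
    (hm₁' : ∀ i, ∃ k : ℕ, k < r ∧ m₁' i = (k : ℝ) / r)
    (hm₂' : ∀ i, ∃ k : ℕ, k < r ∧ m₂' i = (k : ℝ) / r)
    (hne : (m₁, m₂) ≠ (m₁', m₂')) :
    (∫ p : (Fin g → ℝ) × (Fin g → ℝ) in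
        (Set.univ.pi fun _ : Fin g => Set.Ico (0 : ℝ) 1) ×ˢ
          (Set.univ.pi fun _ : Fin g => Set.Ico (0 : ℝ) 1),
        thetaChar m₁ m₂ τ (fun i => (r : ℂ) * torusPoint τ p.1 p.2 i)
          * (starRingEnd ℂ)
              (thetaChar m₁' m₂' τ (fun i => (r : ℂ) * torusPoint τ p.1 p.2 i))
          * (Real.exp (-2 * Real.pi * (r : ℝ)^2
              * ∑ i, ∑ j, p.2 i * imMat τ i j * p.2 j) : ℂ)) = 0 := by

  classical
  have hr0 : (r : ℝ) ≠ 0 := by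
    have : 0 < r := lt_of_lt_of_le two_pos hr
    exact_mod_cast this.ne'
  have hrC : (r : ℂ) ≠ 0 := by exact_mod_cast hr0
  set D : Set ((Fin g → ℝ) × (Fin g → ℝ)) :=
    (Set.univ.pi fun _ : Fin g => Set.Ico (0 : ℝ) 1) ×ˢ
      (Set.univ.pi fun _ : Fin g => Set.Ico (0 : ℝ) 1) with hD
  show (∫ p in D, integrandF g r τ m₁ m₂ m₁' m₂' p) = 0
  -- the two periodicity properties
  have hsplit : ∀ (v : Fin g → ℝ) (p : (Fin g → ℝ) × (Fin g → ℝ)),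
      p + (v, 0) = (p.1 + v, p.2) ∧ p + (0, v) = (p.1, p.2 + v) := by
    intro v p
    constructor <;> (ext <;> simp)
  have hf1 : ∀ (j : Fin g) (p : (Fin g → ℝ) × (Fin g → ℝ)),
      integrandF g r τ m₁ m₂ m₁' m₂' (p + (Pi.single j (1:ℝ), 0))
        = integrandF g r τ m₁ m₂ m₁' m₂' p := by
    intro j p
    rw [(hsplit (Pi.single j 1) p).1]
    rw [integrandF_shift_a g r τ m₁ m₂ m₁' m₂' j (r : ℤ) 1 (by push_cast; ring) p.1 p.2]
    obtain ⟨k₁, _, hk₁⟩ := hm₁ j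
    obtain ⟨k₂, _, hk₂⟩ := hm₁' j
    have harg : 2 * (Real.pi : ℂ) * Complex.I *
        (((r : ℤ) : ℂ) * ((m₁ j : ℂ) - (m₁' j : ℂ)))
        = (((k₁ : ℤ) - (k₂ : ℤ) : ℤ) : ℂ) * (2 * (Real.pi : ℂ) * Complex.I) := by
      rw [hk₁, hk₂]
      push_cast
      field_simp
    rw [harg, Complex.exp_int_mul_two_pi_mul_I, one_mul]
  have hf2 : ∀ (j : Fin g) (p : (Fin g → ℝ) × (Fin g → ℝ)),
      integrandF g r τ m₁ m₂ m₁' m₂' (p + (0, Pi.single j (1:ℝ)))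
        = integrandF g r τ m₁ m₂ m₁' m₂' p := by
    intro j p
    rw [(hsplit (Pi.single j 1) p).2]
    rw [integrandF_shift_b hsym m₁ m₂ m₁' m₂' j (r : ℤ) 1 (by push_cast; ring) p.1 p.2]
    obtain ⟨k₁, _, hk₁⟩ := hm₂' j
    obtain ⟨k₂, _, hk₂⟩ := hm₂ j
    have harg : 2 * (Real.pi : ℂ) * Complex.I *
        (((r : ℤ) : ℂ) * ((m₂' j : ℂ) - (m₂ j : ℂ)))
        = (((k₁ : ℤ) - (k₂ : ℤ) : ℤ) : ℂ) * (2 * (Real.pi : ℂ) * Complex.I) := by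
      rw [hk₁, hk₂]
      push_cast
      field_simp
    rw [harg, Complex.exp_int_mul_two_pi_mul_I, one_mul]
  -- a helper to conclude from an eigen-equation
  have conclude : ∀ ph : ℂ, ph ≠ 1 →
      (∫ p in D, integrandF g r τ m₁ m₂ m₁' m₂' p)
        = ph * ∫ p in D, integrandF g r τ m₁ m₂ m₁' m₂' p →
      (∫ p in D, integrandF g r τ m₁ m₂ m₁' m₂' p) = 0 := by
    intro ph hph key
    have h0 : (1 - ph) * ∫ p in D, integrandF g r τ m₁ m₂ m₁' m₂' p = 0 := by
      linear_combination key
    rcases mul_eq_zero.mp h0 with h | h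
    · exact absurd (by linear_combination -h) hph
    · exact h
  -- nonintegrality of the phase
  have phase_ne : ∀ x : ℝ, x ≠ 0 → |x| < 1 →
      Complex.exp (2 * (Real.pi : ℂ) * Complex.I * (((1 : ℤ) : ℂ) * (x : ℂ))) ≠ 1 := by
    intro x hx hxlt h1
    rw [Complex.exp_eq_one_iff] at h1
    obtain ⟨n, hn⟩ := h1
    have h2πI : (2 * (Real.pi : ℂ) * Complex.I) ≠ 0 := by
      simp [Real.pi_ne_zero, Complex.I_ne_zero]
    have hxn : (x : ℂ) = (n : ℂ) := by
      apply mul_left_cancel₀ h2πI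
      linear_combination hn
    have hxn' : x = (n : ℝ) := by exact_mod_cast hxn
    have : |(n : ℝ)| < 1 := by rwa [← hxn']
    have hn0 : n = 0 := by
      have h : |n| < 1 := by exact_mod_cast this
      rcases abs_lt.mp h with ⟨h1, h2⟩
      omega
    rw [hn0] at hxn'
    simp at hxn'
    exact hx hxn'
  -- bound on differences of characteristics
  have hbound : ∀ (m m' : Fin g → ℝ), (∀ i, ∃ k : ℕ, k < r ∧ m i = (k : ℝ) / r) →
      (∀ i, ∃ k : ℕ, k < r ∧ m' i = (k : ℝ) / r) → ∀ j, |m j - m' j| < 1 := by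
    intro m m' hm hm' j
    obtain ⟨k₁, hk₁lt, hk₁⟩ := hm j
    obtain ⟨k₂, hk₂lt, hk₂⟩ := hm' j
    rw [hk₁, hk₂, abs_lt]
    have hrpos : (0 : ℝ) < r := by positivity
    constructor
    · have h1 : (k₂ : ℝ) / r < 1 := by
        rw [div_lt_one hrpos]; exact_mod_cast hk₂lt
      have h2 : (0 : ℝ) ≤ (k₁ : ℝ) / r := by positivity
      linarith
    · have h1 : (k₁ : ℝ) / r < 1 := by
        rw [div_lt_one hrpos]; exact_mod_cast hk₁lt
      have h2 : (0 : ℝ) ≤ (k₂ : ℝ) / r := by positivity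
      linarith
  -- case split
  have hcase : m₁ ≠ m₁' ∨ (m₁ = m₁' ∧ m₂ ≠ m₂') := by
    by_cases h1 : m₁ = m₁'
    · exact Or.inr ⟨h1, fun h2 => hne (by rw [h1, h2])⟩
    · exact Or.inl h1
  rcases hcase with h1 | ⟨heq, h2⟩
  · obtain ⟨j, hj⟩ := Function.ne_iff.mp h1
    set v : (Fin g → ℝ) × (Fin g → ℝ) := (Pi.single j (1 / (r:ℝ)), 0) with hv
    have hshift : ∀ p, integrandF g r τ m₁ m₂ m₁' m₂' (p + v)
        = Complex.exp (2 * (Real.pi : ℂ) * Complex.I *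
            (((1 : ℤ) : ℂ) * ((m₁ j : ℂ) - (m₁' j : ℂ))))
          * integrandF g r τ m₁ m₂ m₁' m₂' p := by
      intro p
      rw [hv, (hsplit (Pi.single j (1 / (r:ℝ))) p).1]
      exact integrandF_shift_a g r τ m₁ m₂ m₁' m₂' j 1 (1 / (r:ℝ))
        (by push_cast; field_simp) p.1 p.2
    refine conclude (Complex.exp (2 * (Real.pi : ℂ) * Complex.I *
      (((1 : ℤ) : ℂ) * ((m₁ j : ℂ) - (m₁' j : ℂ))))) ?_ ?_
    · have : ((m₁ j : ℂ) - (m₁' j : ℂ)) = ((m₁ j - m₁' j : ℝ) : ℂ) := by push_cast; ring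
      rw [this]
      exact phase_ne _ (sub_ne_zero.mpr hj) (hbound m₁ m₁' hm₁ hm₁' j)
    · calc (∫ p in D, integrandF g r τ m₁ m₂ m₁' m₂' p)
          = ∫ p in D, integrandF g r τ m₁ m₂ m₁' m₂' (p + v) := by
            rw [hD]; exact (integral_box_translate _ hf1 hf2 v).symm
        _ = ∫ p in D, Complex.exp (2 * (Real.pi : ℂ) * Complex.I *
              (((1 : ℤ) : ℂ) * ((m₁ j : ℂ) - (m₁' j : ℂ))))
            * integrandF g r τ m₁ m₂ m₁' m₂' p := by simp only [hshift]
        _ = Complex.exp (2 * (Real.pi : ℂ) * Complex.I *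
              (((1 : ℤ) : ℂ) * ((m₁ j : ℂ) - (m₁' j : ℂ))))
            * ∫ p in D, integrandF g r τ m₁ m₂ m₁' m₂' p := by
            rw [MeasureTheory.integral_const_mul]
  · obtain ⟨j, hj⟩ := Function.ne_iff.mp h2
    set v : (Fin g → ℝ) × (Fin g → ℝ) := (0, Pi.single j (1 / (r:ℝ))) with hv
    have hshift : ∀ p, integrandF g r τ m₁ m₂ m₁' m₂' (p + v)
        = Complex.exp (2 * (Real.pi : ℂ) * Complex.I *
            (((1 : ℤ) : ℂ) * ((m₂' j : ℂ) - (m₂ j : ℂ))))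
          * integrandF g r τ m₁ m₂ m₁' m₂' p := by
      intro p
      rw [hv, (hsplit (Pi.single j (1 / (r:ℝ))) p).2]
      exact integrandF_shift_b hsym m₁ m₂ m₁' m₂' j 1 (1 / (r:ℝ))
        (by push_cast; field_simp) p.1 p.2
    refine conclude (Complex.exp (2 * (Real.pi : ℂ) * Complex.I *
      (((1 : ℤ) : ℂ) * ((m₂' j : ℂ) - (m₂ j : ℂ))))) ?_ ?_
    · have : ((m₂' j : ℂ) - (m₂ j : ℂ)) = ((m₂' j - m₂ j : ℝ) : ℂ) := by push_cast; ring
      rw [this]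
      exact phase_ne _ (sub_ne_zero.mpr (Ne.symm hj)) (hbound m₂' m₂ hm₂' hm₂ j)
    · calc (∫ p in D, integrandF g r τ m₁ m₂ m₁' m₂' p)
          = ∫ p in D, integrandF g r τ m₁ m₂ m₁' m₂' (p + v) := by
            rw [hD]; exact (integral_box_translate _ hf1 hf2 v).symm
        _ = ∫ p in D, Complex.exp (2 * (Real.pi : ℂ) * Complex.I *
              (((1 : ℤ) : ℂ) * ((m₂' j : ℂ) - (m₂ j : ℂ))))
            * integrandF g r τ m₁ m₂ m₁' m₂' p := by simp only [hshift]
        _ = Complex.exp (2 * (Real.pi : ℂ) * Complex.I *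
              (((1 : ℤ) : ℂ) * ((m₂' j : ℂ) - (m₂ j : ℂ))))
            * ∫ p in D, integrandF g r τ m₁ m₂ m₁' m₂' p := by
            rw [MeasureTheory.integral_const_mul]
end

section
/- Let a ≥ 1 and b ≥ 1 be real numbers, and suppose there exists a real number c ≥ 2 such that |a − b| ≤ c·log(2 + a). Then |a − b| ≤ c̃·log(2 + min{a,b}), where c̃ = c·log(6 + 2c·log(2c) − 2c)/log(3). -/
/-- If `a, b ≥ 1` and `|a − b| ≤ c·log(2 + a)` for some `c ≥ 2`, then
`|a − b| ≤ c̃·log(2 + min{a,b})` with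
`c̃ = c·log(6 + 2c·log(2c) − 2c)/log 3`. -/
theorem abs_sub_le_log_min (a b c : ℝ) (ha : 1 ≤ a) (hb : 1 ≤ b) (hc : 2 ≤ c)
    (h : |a - b| ≤ c * Real.log (2 + a)) :
    |a - b| ≤ (c * Real.log (6 + 2 * c * Real.log (2 * c) - 2 * c) / Real.log 3)
      * Real.log (2 + min a b) := by
  have hL0 : 0 < Real.log 3 := Real.log_pos (by norm_num)
  have hc0 : (0:ℝ) < c := by linarith
  have hlc : 1 ≤ Real.log (2 * c) := by
    have h4 : (4:ℝ) ≤ 2 * c := by linarith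
    have he : Real.exp 1 ≤ 2 * c := by
      have := Real.exp_one_lt_d9; linarith
    calc (1:ℝ) = Real.log (Real.exp 1) := (Real.log_exp 1).symm
      _ ≤ Real.log (2 * c) := Real.log_le_log (Real.exp_pos 1) he
  set M : ℝ := 6 + 2 * c * Real.log (2 * c) - 2 * c with hMdef
  have hM6 : (6:ℝ) ≤ M := by nlinarith
  have hm : Real.log 3 ≤ Real.log M :=
    Real.log_le_log (by norm_num) (by linarith)
  have hK : 1 ≤ Real.log M / Real.log 3 := (one_le_div hL0).2 hm
  rcases le_total a b with hab | hab
  · rw [min_eq_left hab]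
    have hla : 0 ≤ Real.log (2 + a) := Real.log_nonneg (by linarith)
    have : c ≤ c * Real.log M / Real.log 3 := by
      rw [mul_div_assoc]
      nlinarith
    nlinarith
  · rw [min_eq_right hab]
    have habs : |a - b| = a - b := abs_of_nonneg (by linarith)
    rw [habs] at h ⊢
    -- tangent line bound on log
    have ht : Real.log ((2 + a) / (2 * c)) ≤ (2 + a) / (2 * c) - 1 :=
      Real.log_le_sub_one_of_pos (by positivity)
    rw [Real.log_div (by linarith) (by positivity)] at ht
    have hloga : Real.log (2 + a) ≤ (2 + a) / (2 * c) + Real.log (2 * c) - 1 := by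
      linarith
    have ha2 : a ≤ 2 * b + 2 + 2 * c * Real.log (2 * c) - 2 * c := by
      have h1 : a - b ≤ c * ((2 + a) / (2 * c) + Real.log (2 * c) - 1) := by
        have := mul_le_mul_of_nonneg_left hloga (le_of_lt hc0)
        linarith
      have h2 : c * ((2 + a) / (2 * c)) = (2 + a) / 2 := by
        field_simp
      nlinarith [h1, h2]
    have hkey : 2 + a ≤ M * (2 + b) / 3 := by
      rw [le_div_iff₀ (by norm_num : (0:ℝ) < 3)]
      nlinarith [mul_nonneg (by nlinarith : (0:ℝ) ≤ 2 * c * Real.log (2 * c) - 2 * c)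
        (by linarith : (0:ℝ) ≤ b - 1)]
    have hlog2 : Real.log (2 + a) ≤ Real.log M + Real.log (2 + b) - Real.log 3 := by
      have := Real.log_le_log (by linarith : (0:ℝ) < 2 + a) hkey
      rw [Real.log_div (by positivity) (by norm_num),
        Real.log_mul (by positivity) (by linarith)] at this
      linarith
    have hu : Real.log 3 ≤ Real.log (2 + b) :=
      Real.log_le_log (by norm_num) (by linarith)
    have hfin : Real.log M + Real.log (2 + b) - Real.log 3 ≤
        Real.log M / Real.log 3 * Real.log (2 + b) := by
      rw [div_mul_eq_mul_div, le_div_iff₀ hL0]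
      nlinarith [mul_nonneg (sub_nonneg.2 hm) (sub_nonneg.2 hu)]
    have : a - b ≤ c * (Real.log M / Real.log 3 * Real.log (2 + b)) := by
      nlinarith
    calc a - b ≤ c * (Real.log M / Real.log 3 * Real.log (2 + b)) := this
      _ = c * Real.log M / Real.log 3 * Real.log (2 + b) := by ring
end

section
/- Let K be a number field with ring of integers O_K, V a finite-dimensional K-vector space, and R(V) the set of finitely generated O_K-submodules of V spanning V over K. Then the function δ defined by δ(𝒱₁,𝒱₂) = (1/[K:ℚ]) · log Card((𝒱₁+𝒱₂)/(𝒱₁∩𝒱₂)) is a distance on R(V): δ(𝒱₁,𝒱₂) ≥ 0 with δ(𝒱₁,𝒱₂) = 0 if and only if 𝒱₁ = 𝒱₂, δ(𝒱₁,𝒱₂) = δ(𝒱₂,𝒱₁), and δ(𝒱₁,𝒱₃) ≤ δ(𝒱₁,𝒱₂) + δ(𝒱₂,𝒱₃) for all 𝒱₁, 𝒱₂, 𝒱₃ ∈ R(V). -/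
open NumberField

/-- The quotient module `(𝒱₁ + 𝒱₂)/(𝒱₁ ∩ 𝒱₂)` attached to two submodules. -/
abbrev latticeQuot {R M : Type*} [CommRing R] [AddCommGroup M] [Module R M]
    (V₁ V₂ : Submodule R M) :=
  (V₁ ⊔ V₂ : Submodule R M) ⧸ ((V₁ ⊓ V₂).comap (V₁ ⊔ V₂).subtype)

/-- The distance `δ(𝒱₁,𝒱₂) = (1/[K:ℚ]) log Card((𝒱₁+𝒱₂)/(𝒱₁∩𝒱₂))` between
two `𝓞 K`-lattices in a `K`-vector space `V`. -/
noncomputable def latticeDelta (K : Type*) [Field K] [NumberField K]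
    {V : Type*} [AddCommGroup V] [Module K V]
    [Module (𝓞 K) V] [IsScalarTower (𝓞 K) K V]
    (V₁ V₂ : Submodule (𝓞 K) V) : ℝ :=
  (1 / (Module.finrank ℚ K : ℝ)) * Real.log (Nat.card (latticeQuot V₁ V₂))

/-- `𝒱` is a lattice in the `K`-vector space `V`: a finitely generated
`𝓞 K`-submodule spanning `V` over `K`. -/
def IsLattice (K : Type*) [Field K] [NumberField K]
    {V : Type*} [AddCommGroup V] [Module K V]
    [Module (𝓞 K) V] [IsScalarTower (𝓞 K) K V]
    (W : Submodule (𝓞 K) V) : Prop :=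
  W.FG ∧ Submodule.span K (W : Set V) = ⊤

section Aux

/-- Bridge: the cardinality of the lattice quotient is a relative index of
additive subgroups. -/
lemma latticeQuot_card_eq_relindex {R M : Type*} [CommRing R] [AddCommGroup M] [Module R M]
    (A B : Submodule R M) :
    Nat.card (latticeQuot A B) =
      (A ⊓ B).toAddSubgroup.relIndex (A ⊔ B).toAddSubgroup := rfl

lemma inf_toAddSubgroup' {R M : Type*} [CommRing R] [AddCommGroup M] [Module R M]
    (A B : Submodule R M) :
    (A ⊓ B).toAddSubgroup = A.toAddSubgroup ⊓ B.toAddSubgroup := rfl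

/-- Triangle inequality for relative indices of additive subgroups. -/
lemma relindex_triangle {G : Type*} [AddGroup G] (a b c : AddSubgroup G)
    (hab : a.relIndex b ≠ 0) (hbc : b.relIndex c ≠ 0) :
    a.relIndex c ≤ a.relIndex b * b.relIndex c := by
  have h1 : a.relIndex (b ⊓ c) ≠ 0 := fun h =>
    hab (AddSubgroup.relIndex_eq_zero_of_le_right inf_le_left h)
  have h2 : (a ⊓ b).relIndex c ≠ 0 := by
    rw [← AddSubgroup.relIndex_inf_mul_relIndex]
    exact mul_ne_zero h1 hbc
  calc a.relIndex c ≤ (a ⊓ b).relIndex c :=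
        AddSubgroup.relIndex_le_of_le_left inf_le_left h2
    _ = a.relIndex (b ⊓ c) * b.relIndex c :=
        (AddSubgroup.relIndex_inf_mul_relIndex a b c).symm
    _ ≤ a.relIndex b * b.relIndex c :=
        Nat.mul_le_mul_right _ (AddSubgroup.relIndex_le_of_le_right inf_le_left hab)

/-- The cardinality of the lattice quotient in terms of relative indices. -/
lemma latticeQuot_card_eq {R M : Type*} [CommRing R] [AddCommGroup M] [Module R M]
    (A B : Submodule R M) :
    Nat.card (latticeQuot A B) =
      B.toAddSubgroup.relIndex A.toAddSubgroup *
        A.toAddSubgroup.relIndex B.toAddSubgroup := by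
  rw [latticeQuot_card_eq_relindex, inf_toAddSubgroup', Submodule.sup_toAddSubgroup]
  set a := A.toAddSubgroup
  set b := B.toAddSubgroup
  rw [← AddSubgroup.relIndex_mul_relIndex (a ⊓ b) a (a ⊔ b) inf_le_left le_sup_left,
    inf_comm a b, AddSubgroup.inf_relIndex_right, AddSubgroup.relIndex_sup_left]

variable (K : Type*) [Field K] [NumberField K]
    {V : Type*} [AddCommGroup V] [Module K V]
    [Module (𝓞 K) V] [IsScalarTower (𝓞 K) K V]

/-- Clearing denominators: an element of the `K`-span of an `𝓞 K`-submodule can be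
scaled into it by a nonzero algebraic integer. -/
lemma exists_smul_mem_of_mem_span (B : Submodule (𝓞 K) V)
    (x : V) (hx : x ∈ Submodule.span K (B : Set V)) :
    ∃ c : 𝓞 K, c ≠ 0 ∧ c • x ∈ B := by
  rw [Submodule.mem_span_set'] at hx
  obtain ⟨n, f, g, rfl⟩ := hx
  obtain ⟨b, hb⟩ := IsLocalization.exist_integer_multiples
    (nonZeroDivisors (𝓞 K)) (Finset.univ : Finset (Fin n)) f
  refine ⟨(b : 𝓞 K), nonZeroDivisors.coe_ne_zero b, ?_⟩
  rw [Finset.smul_sum]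
  refine Submodule.sum_mem _ fun i _ => ?_
  obtain ⟨r, hr⟩ := hb i (Finset.mem_univ i)
  have : (b : 𝓞 K) • (f i • (g i : V)) = r • (g i : V) := by
    rw [← smul_assoc, ← hr, algebraMap_smul]
  rw [this]
  exact Submodule.smul_mem _ _ (g i).2

/-- Between any two lattices there is a nonzero scalar carrying one into the other. -/
lemma exists_smul_le (A B : Submodule (𝓞 K) V) (hA : IsLattice K A) (hB : IsLattice K B) :
    ∃ c : 𝓞 K, c ≠ 0 ∧ ∀ x ∈ A, c • x ∈ B := by
  obtain ⟨s, hsA⟩ := hA.1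
  have key : ∀ x : V, ∃ c : 𝓞 K, c ≠ 0 ∧ c • x ∈ B := fun x =>
    exists_smul_mem_of_mem_span K B x (by rw [hB.2]; trivial)
  choose f hf0 hfB using key
  refine ⟨∏ x ∈ s, f x, Finset.prod_ne_zero_iff.mpr fun x _ => hf0 x, ?_⟩
  classical
  have hgen : ∀ x ∈ s, (∏ y ∈ s, f y) • x ∈ B := by
    intro x hx
    rw [← Finset.mul_prod_erase s f hx, mul_comm, mul_smul]
    exact Submodule.smul_mem _ _ (hfB x)
  have hle : A ≤ B.comap (LinearMap.lsmul (𝓞 K) V (∏ x ∈ s, f x)) := by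
    rw [← hsA]
    exact Submodule.span_le.mpr fun x hx => hgen x hx
  exact fun x hxA => hle hxA

set_option maxHeartbeats 1000000 in
set_option synthInstance.maxHeartbeats 400000 in
/-- The quotient of two lattices is finite. -/
lemma latticeQuot_finite (A B : Submodule (𝓞 K) V) (hA : IsLattice K A) (hB : IsLattice K B) :
    Finite (latticeQuot A B) := by
  obtain ⟨c, hc0, hc⟩ := exists_smul_le K B A hB hA
  obtain ⟨d, hd0, hd⟩ := exists_smul_le K A B hA hB
  set e : 𝓞 K := c * d with he
  have he0 : e ≠ 0 := mul_ne_zero hc0 hd0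
  have hkey : ∀ x ∈ (A ⊔ B : Submodule (𝓞 K) V), e • x ∈ A ⊓ B := by
    intro x hx
    rw [Submodule.mem_sup] at hx
    obtain ⟨y, hy, z, hz, rfl⟩ := hx
    rw [smul_add]
    refine Submodule.add_mem _ ?_ ?_
    · have h1 : e • y = c • (d • y) := by rw [he, mul_smul]
      constructor
      · rw [h1]; exact hc _ (hd _ hy)
      · rw [h1]; exact Submodule.smul_mem _ _ (hd _ hy)
    · have h2 : e • z = d • (c • z) := by rw [he, mul_comm, mul_smul]
      constructor
      · rw [h2]; exact Submodule.smul_mem _ _ (hc _ hz)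
      · rw [h2]; exact hd _ (hc _ hz)
  have htor : Module.IsTorsionBy (𝓞 K) (latticeQuot A B) e := by
    intro q
    obtain ⟨z, rfl⟩ := Submodule.Quotient.mk_surjective _ q
    rw [← Submodule.Quotient.mk_smul, Submodule.Quotient.mk_eq_zero]
    simpa using hkey _ z.2
  haveI : Module.Finite (𝓞 K) ↥(A ⊔ B) := Module.Finite.iff_fg.mpr (hA.1.sup hB.1)
  haveI : Module.Finite (𝓞 K) (latticeQuot A B) := Module.Finite.quotient _ _
  set I : Ideal (𝓞 K) := Ideal.span {e} with hI
  have hT : Module.IsTorsionBySet (𝓞 K) (latticeQuot A B) I := by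
    rw [hI, ← Ideal.submodule_span_eq]
    exact (Module.isTorsionBySet_span_singleton_iff e).mpr htor
  letI : Module (𝓞 K ⧸ I) (latticeQuot A B) := hT.module
  haveI : IsScalarTower (𝓞 K) (𝓞 K ⧸ I) (latticeQuot A B) := hT.isScalarTower
  haveI : Module.Finite (𝓞 K ⧸ I) (latticeQuot A B) :=
    Module.Finite.of_restrictScalars_finite (𝓞 K) _ _
  haveI : Finite (𝓞 K ⧸ I) := by
    have : Finite (𝓞 K ⧸ I) := Ideal.finiteQuotientOfFreeOfNeBot I
      (by simpa [hI, Ideal.span_singleton_eq_bot] using he0)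
    exact this
  exact Module.finite_of_finite (𝓞 K ⧸ I)

end Aux

/-- The function `δ` is a distance on the set `R(V)` of `𝓞 K`-lattices of `V`:
it is nonnegative, vanishes exactly on the diagonal, is symmetric and
satisfies the triangle inequality. -/
theorem latticeDelta_is_distance (K : Type*) [Field K] [NumberField K]
    (V : Type*) [AddCommGroup V] [Module K V] [FiniteDimensional K V]
    [Module (𝓞 K) V] [IsScalarTower (𝓞 K) K V]
    (V₁ V₂ V₃ : Submodule (𝓞 K) V)
    (h₁ : IsLattice K V₁) (h₂ : IsLattice K V₂) (h₃ : IsLattice K V₃) :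
    0 ≤ latticeDelta K V₁ V₂
      ∧ (latticeDelta K V₁ V₂ = 0 ↔ V₁ = V₂)
      ∧ latticeDelta K V₁ V₂ = latticeDelta K V₂ V₁
      ∧ latticeDelta K V₁ V₃ ≤ latticeDelta K V₁ V₂ + latticeDelta K V₂ V₃ := by
  have hd : (0 : ℝ) < (Module.finrank ℚ K : ℝ) := by
    exact_mod_cast Module.finrank_pos
  haveI f12 := latticeQuot_finite K V₁ V₂ h₁ h₂
  haveI f23 := latticeQuot_finite K V₂ V₃ h₂ h₃
  haveI f13 := latticeQuot_finite K V₁ V₃ h₁ h₃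
  set N₁₂ := Nat.card (latticeQuot V₁ V₂) with hN12
  set N₂₃ := Nat.card (latticeQuot V₂ V₃) with hN23
  set N₁₃ := Nat.card (latticeQuot V₁ V₃) with hN13
  have hp12 : 0 < N₁₂ := Nat.card_pos
  have hp23 : 0 < N₂₃ := Nat.card_pos
  have hp13 : 0 < N₁₃ := Nat.card_pos
  set a := V₁.toAddSubgroup
  set b := V₂.toAddSubgroup
  set c := V₃.toAddSubgroup
  have e12 : N₁₂ = b.relIndex a * a.relIndex b := latticeQuot_card_eq V₁ V₂
  have e23 : N₂₃ = c.relIndex b * b.relIndex c := latticeQuot_card_eq V₂ V₃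
  have e13 : N₁₃ = c.relIndex a * a.relIndex c := latticeQuot_card_eq V₁ V₃
  have hba : b.relIndex a ≠ 0 := by
    intro h; rw [e12, h, zero_mul] at hp12; exact absurd rfl hp12.ne
  have hab : a.relIndex b ≠ 0 := by
    intro h; rw [e12, h, mul_zero] at hp12; exact absurd rfl hp12.ne
  have hcb : c.relIndex b ≠ 0 := by
    intro h; rw [e23, h, zero_mul] at hp23; exact absurd rfl hp23.ne
  have hbc : b.relIndex c ≠ 0 := by
    intro h; rw [e23, h, mul_zero] at hp23; exact absurd rfl hp23.ne
  have htri : N₁₃ ≤ N₁₂ * N₂₃ := by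
    rw [e12, e23, e13]
    calc c.relIndex a * a.relIndex c
        ≤ (c.relIndex b * b.relIndex a) * (a.relIndex b * b.relIndex c) :=
          Nat.mul_le_mul (relindex_triangle c b a hcb hba) (relindex_triangle a b c hab hbc)
      _ = b.relIndex a * a.relIndex b * (c.relIndex b * b.relIndex c) := by ring
  refine ⟨?_, ?_, ?_, ?_⟩
  · -- nonnegativity
    apply mul_nonneg (by positivity)
    apply Real.log_nonneg
    exact_mod_cast hp12
  · -- vanishing iff equal
    unfold latticeDelta
    rw [mul_eq_zero]
    constructor
    · rintro (h | h)
      · exact absurd h (by positivity)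
      · have hcard : N₁₂ = 1 := by
          rcases Real.log_eq_zero.mp h with h' | h' | h'
          · exact absurd h' (by exact_mod_cast hp12.ne')
          · exact_mod_cast h'
          · exact absurd h' (by
              have : (0:ℝ) < (N₁₂ : ℝ) := by exact_mod_cast hp12
              linarith)
        have hsub : Subsingleton (latticeQuot V₁ V₂) :=
          (Nat.card_eq_one_iff_unique.mp hcard).1
        have htop : (V₁ ⊓ V₂).comap (V₁ ⊔ V₂).subtype = ⊤ :=
          Submodule.Quotient.subsingleton_iff.mp hsub
        have hle : (V₁ ⊔ V₂ : Submodule (𝓞 K) V) ≤ V₁ ⊓ V₂ :=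
          Submodule.comap_subtype_eq_top.mp htop
        exact le_antisymm (le_sup_left.trans (hle.trans inf_le_right))
          (le_sup_right.trans (hle.trans inf_le_left))
    · rintro rfl
      right
      have : (V₁ ⊓ V₁).comap (V₁ ⊔ V₁).subtype = ⊤ := by
        rw [inf_idem, sup_idem, Submodule.comap_subtype_eq_top]
      have hsub : Subsingleton (latticeQuot V₁ V₁) :=
        Submodule.Quotient.subsingleton_iff.mpr this
      have : N₁₂ = 1 := Nat.card_eq_one_iff_unique.mpr ⟨hsub, ⟨0⟩⟩
      rw [← hN12, this]
      simp
  · -- symmetry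
    unfold latticeDelta
    congr 1
    rw [latticeQuot_card_eq V₁ V₂, latticeQuot_card_eq V₂ V₁, mul_comm]
  · -- triangle inequality
    unfold latticeDelta
    rw [← mul_add]
    apply mul_le_mul_of_nonneg_left _ (by positivity)
    rw [← Real.log_mul (by exact_mod_cast hp12.ne') (by exact_mod_cast hp23.ne')]
    apply Real.log_le_log (by exact_mod_cast hp13)
    exact_mod_cast htri
end
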